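/- arXiv:2302.04610 — 9 statements merged into one kernel-verified Lean document; each statement's English description precedes it below -/
import Mathlib

section
/- Let (X,d_X) and (Y,d_Y) be complete separable metric spaces. Let μ_c, μ_a be Borel probability measures on X and ν_c, ν_a be Borel probability measures on Y, let ε_1, ε_2 ∈ [0,1], and set μ = (1−ε_1)μ_c + ε_1 μ_a and ν = (1−ε_2)ν_c + ε_2 ν_a. Assume KL(μ_a,μ_c) and KL(ν_a,ν_c) are finite and strictly positive, and KL(μ_c,μ_a) and KL(ν_c,ν_a) are finite. Then for all ρ_1, ρ_2 ≥ 0 and τ_1, τ_2 ≥ 0: GW^rob_{ρ_1,ρ_2}(μ,ν) ≤ GW(μ_c,ν_c) + max(0, ε_1 − ρ_1/KL(μ_a,μ_c))·τ_1·KL(μ_c,μ_a) + max(0, ε_2 − ρ_2/KL(ν_a,ν_c))·τ_2·KL(ν_c,ν_a). -/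
open MeasureTheory ENNReal Classical

/-- Kullback–Leibler divergence between two measures: `∫ log (dρ/dσ) dρ` when `ρ ≪ σ`
and the log-likelihood ratio is integrable, and `∞` otherwise. -/
noncomputable def KLdiv {X : Type*} [MeasurableSpace X] (ρ σ : Measure X) : ℝ≥0∞ :=
  if ρ ≪ σ ∧ Integrable (llr ρ σ) ρ then ENNReal.ofReal (∫ x, llr ρ σ x ∂ρ) else ⊤

/-- Generalized Kullback–Leibler divergence between finite positive measures:
`∫ log (dρ/dσ) dρ - ρ(X) + σ(X)` when `ρ ≪ σ` (and the integral is finite), `∞` otherwise. -/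
noncomputable def GKLdiv {X : Type*} [MeasurableSpace X] (ρ σ : Measure X) : ℝ≥0∞ :=
  if ρ ≪ σ ∧ Integrable (llr ρ σ) ρ then
    ENNReal.ofReal (∫ x, llr ρ σ x ∂ρ - (ρ Set.univ).toReal + (σ Set.univ).toReal) else ⊤

/-- The Gromov–Wasserstein transportation cost of a plan `π`:
`∬ |d_X(x,x') - d_Y(y,y')|² dπ dπ`. -/
noncomputable def GWcost {X Y : Type*} [MetricSpace X] [MetricSpace Y]
    [MeasurableSpace X] [MeasurableSpace Y] (π : Measure (X × Y)) : ℝ≥0∞ :=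
  ∫⁻ p, ∫⁻ q, ENNReal.ofReal (|dist p.1 q.1 - dist p.2 q.2| ^ 2) ∂π ∂π

/-- The Gromov–Wasserstein value: infimum of the cost over couplings of `μ` and `ν`. -/
noncomputable def GW {X Y : Type*} [MetricSpace X] [MetricSpace Y]
    [MeasurableSpace X] [MeasurableSpace Y] (μ : Measure X) (ν : Measure Y) : ℝ≥0∞ :=
  ⨅ (π : Measure (X × Y)) (_ : π.map Prod.fst = μ) (_ : π.map Prod.snd = ν), GWcost π

/-- `F(α,β)`: infimum over finite positive measures `π` on `X × Y` of the GW cost plus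
KL penalties `τ₁ GKL(π₁, α) + τ₂ GKL(π₂, β)` on the marginals. -/
noncomputable def Fobj {X Y : Type*} [MetricSpace X] [MetricSpace Y]
    [MeasurableSpace X] [MeasurableSpace Y] (τ₁ τ₂ : ℝ)
    (α : Measure X) (β : Measure Y) : ℝ≥0∞ :=
  ⨅ (π : Measure (X × Y)) (_ : IsFiniteMeasure π),
    GWcost π + ENNReal.ofReal τ₁ * GKLdiv (π.map Prod.fst) α
      + ENNReal.ofReal τ₂ * GKLdiv (π.map Prod.snd) β

/-- The robust Gromov–Wasserstein value `GW^rob_{ρ₁,ρ₂}(μ,ν)`. -/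
noncomputable def GWrob {X Y : Type*} [MetricSpace X] [MetricSpace Y]
    [MeasurableSpace X] [MeasurableSpace Y] (ρ₁ ρ₂ τ₁ τ₂ : ℝ)
    (μ : Measure X) (ν : Measure Y) : ℝ≥0∞ :=
  ⨅ (α : Measure X) (_ : IsProbabilityMeasure α) (_ : KLdiv μ α ≤ ENNReal.ofReal ρ₁)
    (β : Measure Y) (_ : IsProbabilityMeasure β) (_ : KLdiv ν β ≤ ENNReal.ofReal ρ₂),
    Fobj τ₁ τ₂ α β

section Aux

variable {Z : Type*} [MeasurableSpace Z]

lemma sub_one_le_mul_log {x : ℝ} (hx : 0 ≤ x) : x - 1 ≤ x * Real.log x := by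
  rcases eq_or_lt_of_le hx with h | h
  · simp [← h]
  · have h1 : Real.log x⁻¹ ≤ x⁻¹ - 1 := Real.log_le_sub_one_of_pos (by positivity)
    rw [Real.log_inv] at h1
    have h2 := mul_le_mul_of_nonneg_left h1 h.le
    rw [mul_sub, mul_inv_cancel₀ h.ne', mul_neg] at h2
    linarith

lemma integrable_squeeze {μ : Measure Z} {f g₁ g₂ : Z → ℝ}
    (hf : AEStronglyMeasurable f μ) (h1 : g₁ ≤ᵐ[μ] f) (h2 : f ≤ᵐ[μ] g₂)
    (hg1 : Integrable g₁ μ) (hg2 : Integrable g₂ μ) : Integrable f μ := by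
  refine Integrable.mono' (hg1.norm.add hg2.norm) hf ?_
  filter_upwards [h1, h2] with x ha hb
  simp only [Pi.add_apply, Real.norm_eq_abs]
  rw [abs_le]
  constructor
  · nlinarith [neg_abs_le (g₁ x), abs_nonneg (g₂ x)]
  · nlinarith [le_abs_self (g₂ x), abs_nonneg (g₁ x)]

lemma isFiniteMeasure_ofReal_smul (c : ℝ) (σ : Measure Z) [IsFiniteMeasure σ] :
    IsFiniteMeasure (ENNReal.ofReal c • σ) := by
  constructor
  rw [Measure.smul_apply, smul_eq_mul]
  exact ENNReal.mul_lt_top ENNReal.ofReal_lt_top (measure_lt_top σ _)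

lemma isProbabilityMeasure_mix {s : ℝ} (hs0 : 0 ≤ s) (hs1 : s ≤ 1)
    (σ₀ σ₁ : Measure Z) [IsProbabilityMeasure σ₀] [IsProbabilityMeasure σ₁] :
    IsProbabilityMeasure (ENNReal.ofReal (1 - s) • σ₀ + ENNReal.ofReal s • σ₁) := by
  constructor
  rw [Measure.add_apply, Measure.smul_apply, Measure.smul_apply, measure_univ, measure_univ,
    smul_eq_mul, smul_eq_mul, mul_one, mul_one, ← ENNReal.ofReal_add (by linarith) hs0]
  norm_num

lemma absolutelyContinuous_mix_left {s : ℝ} (hs : s < 1) {ρ σ₀ : Measure Z} (h : ρ ≪ σ₀)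
    (σ₁ : Measure Z) : ρ ≪ ENNReal.ofReal (1 - s) • σ₀ + ENNReal.ofReal s • σ₁ := by
  refine h.trans ?_
  intro E hE
  rw [Measure.add_apply, add_eq_zero, Measure.smul_apply, smul_eq_mul, mul_eq_zero] at hE
  rcases hE.1 with h0 | h0
  · rw [ENNReal.ofReal_eq_zero] at h0; linarith
  · exact h0

lemma absolutelyContinuous_mix_right {s : ℝ} (hs : 0 < s) {ρ σ₁ : Measure Z} (h : ρ ≪ σ₁)
    (σ₀ : Measure Z) : ρ ≪ ENNReal.ofReal (1 - s) • σ₀ + ENNReal.ofReal s • σ₁ := by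
  refine h.trans ?_
  intro E hE
  rw [Measure.add_apply, add_eq_zero, Measure.smul_apply (ENNReal.ofReal s), smul_eq_mul,
    mul_eq_zero] at hE
  rcases hE.2 with h0 | h0
  · rw [ENNReal.ofReal_eq_zero] at h0; linarith
  · exact h0

lemma mix_absolutelyContinuous {ρ₀ ρ₁ σ : Measure Z} (h₀ : ρ₀ ≪ σ) (h₁ : ρ₁ ≪ σ) (a b : ℝ≥0∞) :
    (a • ρ₀ + b • ρ₁) ≪ σ := by
  intro E hE
  rw [Measure.add_apply, Measure.smul_apply, Measure.smul_apply, h₀ hE, h₁ hE]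
  simp

lemma llr_self_ae (ρ : Measure Z) [SigmaFinite ρ] : llr ρ ρ =ᵐ[ρ] 0 := by
  filter_upwards [Measure.rnDeriv_self ρ] with x hx
  simp [llr, hx]

lemma integrable_llr_self (ρ : Measure Z) [SigmaFinite ρ] : Integrable (llr ρ ρ) ρ :=
  (integrable_congr (llr_self_ae ρ)).mpr (integrable_zero _ _ _)

lemma integral_llr_self (ρ : Measure Z) [SigmaFinite ρ] : ∫ x, llr ρ ρ x ∂ρ = 0 := by
  rw [integral_congr_ae (llr_self_ae ρ)]; simp

end Aux

section KLC

variable {Z : Type*} [MeasurableSpace Z]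

lemma klc1 {ρ₀ ρ₁ σ : Measure Z} [IsFiniteMeasure ρ₀] [IsFiniteMeasure ρ₁] [IsFiniteMeasure σ]
    {t : ℝ} (ht0 : 0 ≤ t) (ht1 : t ≤ 1)
    (h₀ : ρ₀ ≪ σ) (hi₀ : Integrable (llr ρ₀ σ) ρ₀)
    (h₁ : ρ₁ ≪ σ) (hi₁ : Integrable (llr ρ₁ σ) ρ₁) :
    (ENNReal.ofReal (1 - t) • ρ₀ + ENNReal.ofReal t • ρ₁) ≪ σ ∧
      Integrable (llr (ENNReal.ofReal (1 - t) • ρ₀ + ENNReal.ofReal t • ρ₁) σ)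
        (ENNReal.ofReal (1 - t) • ρ₀ + ENNReal.ofReal t • ρ₁) ∧
      ∫ x, llr (ENNReal.ofReal (1 - t) • ρ₀ + ENNReal.ofReal t • ρ₁) σ x
          ∂(ENNReal.ofReal (1 - t) • ρ₀ + ENNReal.ofReal t • ρ₁)
        ≤ (1 - t) * ∫ x, llr ρ₀ σ x ∂ρ₀ + t * ∫ x, llr ρ₁ σ x ∂ρ₁ := by
  haveI := isFiniteMeasure_ofReal_smul (1 - t) ρ₀
  haveI := isFiniteMeasure_ofReal_smul t ρ₁
  set m : Measure Z := ENNReal.ofReal (1 - t) • ρ₀ + ENNReal.ofReal t • ρ₁ with hm_def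
  have hm : m ≪ σ := mix_absolutelyContinuous h₀ h₁ _ _
  -- density identity
  have htoReal : (fun x => (m.rnDeriv σ x).toReal)
      =ᵐ[σ] fun x => (1 - t) * (ρ₀.rnDeriv σ x).toReal + t * (ρ₁.rnDeriv σ x).toReal := by
    have hadd := Measure.rnDeriv_add (ENNReal.ofReal (1 - t) • ρ₀) (ENNReal.ofReal t • ρ₁) σ
    have hs0 := Measure.rnDeriv_smul_left_of_ne_top ρ₀ σ
      (show ENNReal.ofReal (1 - t) ≠ ⊤ from ENNReal.ofReal_ne_top)
    have hs1 := Measure.rnDeriv_smul_left_of_ne_top ρ₁ σ (show ENNReal.ofReal t ≠ ⊤ from ENNReal.ofReal_ne_top)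
    filter_upwards [hadd, hs0, hs1, Measure.rnDeriv_lt_top ρ₀ σ, Measure.rnDeriv_lt_top ρ₁ σ]
      with x hx1 hx2 hx3 hf₀ hf₁
    rw [hm_def, hx1, Pi.add_apply, hx2, hx3, Pi.smul_apply, Pi.smul_apply, smul_eq_mul,
      smul_eq_mul, ENNReal.toReal_add (ENNReal.mul_ne_top ENNReal.ofReal_ne_top hf₀.ne)
        (ENNReal.mul_ne_top ENNReal.ofReal_ne_top hf₁.ne),
      ENNReal.toReal_mul, ENNReal.toReal_mul, ENNReal.toReal_ofReal (by linarith),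
      ENNReal.toReal_ofReal ht0]
  -- pointwise convexity inequality on the σ side
  have hkey : (fun x => (m.rnDeriv σ x).toReal * llr m σ x) ≤ᵐ[σ]
      fun x => (1 - t) * ((ρ₀.rnDeriv σ x).toReal * llr ρ₀ σ x)
             + t * ((ρ₁.rnDeriv σ x).toReal * llr ρ₁ σ x) := by
    filter_upwards [htoReal] with x hx
    have h := Real.convexOn_mul_log.2 (Set.mem_Ici.mpr (ENNReal.toReal_nonneg
        (a := ρ₀.rnDeriv σ x))) (Set.mem_Ici.mpr (ENNReal.toReal_nonneg (a := ρ₁.rnDeriv σ x)))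
        (by linarith : (0:ℝ) ≤ 1 - t) ht0 (by ring)
    simp only [smul_eq_mul] at h
    simp only [llr, hx]
    exact h
  -- lower bound
  have hlow : (fun x => (m.rnDeriv σ x).toReal - 1)
      ≤ᵐ[σ] fun x => (m.rnDeriv σ x).toReal * llr m σ x := by
    refine Filter.Eventually.of_forall fun x => ?_
    exact sub_one_le_mul_log ENNReal.toReal_nonneg
  -- integrabilities
  have hI₀ : Integrable (fun x => (ρ₀.rnDeriv σ x).toReal * llr ρ₀ σ x) σ := by
    have := (integrable_rnDeriv_smul_iff h₀ (f := llr ρ₀ σ)).mpr hi₀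
    simpa [smul_eq_mul] using this
  have hI₁ : Integrable (fun x => (ρ₁.rnDeriv σ x).toReal * llr ρ₁ σ x) σ := by
    have := (integrable_rnDeriv_smul_iff h₁ (f := llr ρ₁ σ)).mpr hi₁
    simpa [smul_eq_mul] using this
  have hG : Integrable (fun x => (1 - t) * ((ρ₀.rnDeriv σ x).toReal * llr ρ₀ σ x)
      + t * ((ρ₁.rnDeriv σ x).toReal * llr ρ₁ σ x)) σ := (hI₀.const_mul _).add (hI₁.const_mul _)
  have hlow_int : Integrable (fun x => (m.rnDeriv σ x).toReal - 1) σ :=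
    (Measure.integrable_toReal_rnDeriv (μ := m) (ν := σ)).sub (integrable_const 1)
  have hM : Integrable (fun x => (m.rnDeriv σ x).toReal * llr m σ x) σ :=
    integrable_squeeze (((Measure.measurable_rnDeriv m σ).ennreal_toReal.mul
      (measurable_llr m σ)).aestronglyMeasurable) hlow hkey hlow_int hG
  have hillr : Integrable (llr m σ) m :=
    (integrable_rnDeriv_smul_iff hm (f := llr m σ)).mp (by simpa [smul_eq_mul] using hM)
  refine ⟨hm, hillr, ?_⟩
  have hint : ∫ x, llr m σ x ∂m = ∫ x, (m.rnDeriv σ x).toReal * llr m σ x ∂σ := by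
    rw [← integral_rnDeriv_smul hm (f := llr m σ)]
    simp [smul_eq_mul]
  rw [hint]
  calc ∫ x, (m.rnDeriv σ x).toReal * llr m σ x ∂σ
      ≤ ∫ x, ((1 - t) * ((ρ₀.rnDeriv σ x).toReal * llr ρ₀ σ x)
          + t * ((ρ₁.rnDeriv σ x).toReal * llr ρ₁ σ x)) ∂σ := integral_mono_ae hM hG hkey
    _ = (1 - t) * ∫ x, llr ρ₀ σ x ∂ρ₀ + t * ∫ x, llr ρ₁ σ x ∂ρ₁ := by
        rw [integral_add (hI₀.const_mul _) (hI₁.const_mul _), integral_const_mul,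
          integral_const_mul]
        congr 1
        · congr 1
          rw [← integral_rnDeriv_smul h₀ (f := llr ρ₀ σ)]
          simp [smul_eq_mul]
        · congr 1
          rw [← integral_rnDeriv_smul h₁ (f := llr ρ₁ σ)]
          simp [smul_eq_mul]

end KLC

section KLC2

variable {Z : Type*} [MeasurableSpace Z]

lemma klc2 {ρ σ₀ σ₁ : Measure Z} [IsProbabilityMeasure ρ] [IsProbabilityMeasure σ₀]
    [IsProbabilityMeasure σ₁] {s : ℝ} (hs0 : 0 ≤ s) (hs1 : s ≤ 1)
    (h₀ : ρ ≪ σ₀) (hi₀ : Integrable (llr ρ σ₀) ρ)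
    (h₁ : ρ ≪ σ₁) (hi₁ : Integrable (llr ρ σ₁) ρ) :
    ρ ≪ (ENNReal.ofReal (1 - s) • σ₀ + ENNReal.ofReal s • σ₁) ∧
      Integrable (llr ρ (ENNReal.ofReal (1 - s) • σ₀ + ENNReal.ofReal s • σ₁)) ρ ∧
      ∫ x, llr ρ (ENNReal.ofReal (1 - s) • σ₀ + ENNReal.ofReal s • σ₁) x ∂ρ
        ≤ (1 - s) * ∫ x, llr ρ σ₀ x ∂ρ + s * ∫ x, llr ρ σ₁ x ∂ρ := by
  rcases eq_or_lt_of_le hs0 with hz | hs0'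
  · rw [← hz]
    simp only [sub_zero, ENNReal.ofReal_one, one_smul, ENNReal.ofReal_zero, zero_smul, add_zero]
    exact ⟨h₀, hi₀, by simp⟩
  rcases eq_or_lt_of_le hs1 with ho | hs1'
  · rw [ho]
    simp only [sub_self, ENNReal.ofReal_zero, zero_smul, ENNReal.ofReal_one, one_smul, zero_add]
    exact ⟨h₁, hi₁, by simp⟩
  haveI := isFiniteMeasure_ofReal_smul (1 - s) σ₀
  haveI := isFiniteMeasure_ofReal_smul s σ₁
  set m : Measure Z := ENNReal.ofReal (1 - s) • σ₀ + ENNReal.ofReal s • σ₁ with hm_def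
  haveI : IsProbabilityMeasure m := isProbabilityMeasure_mix hs0 hs1 σ₀ σ₁
  have hρm : ρ ≪ m := absolutelyContinuous_mix_left hs1' h₀ σ₁
  have hσ₀m : σ₀ ≪ m := absolutelyContinuous_mix_left hs1' Measure.AbsolutelyContinuous.rfl σ₁
  have hσ₁m : σ₁ ≪ m := absolutelyContinuous_mix_right hs0' Measure.AbsolutelyContinuous.rfl σ₀
  -- the densities of σ₀, σ₁ w.r.t. m sum (with weights) to 1, a.e. m
  have hsum_m : ∀ᵐ x ∂m, ENNReal.ofReal (1 - s) * σ₀.rnDeriv m x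
      + ENNReal.ofReal s * σ₁.rnDeriv m x = 1 := by
    have hadd := Measure.rnDeriv_add (ENNReal.ofReal (1 - s) • σ₀) (ENNReal.ofReal s • σ₁) m
    have ha0 := Measure.rnDeriv_smul_left_of_ne_top σ₀ m
      (show ENNReal.ofReal (1 - s) ≠ ⊤ from ENNReal.ofReal_ne_top)
    have ha1 := Measure.rnDeriv_smul_left_of_ne_top σ₁ m
      (show ENNReal.ofReal s ≠ ⊤ from ENNReal.ofReal_ne_top)
    filter_upwards [hadd, ha0, ha1, Measure.rnDeriv_self m] with x hx1 hx2 hx3 hx4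
    rw [← hx4, hm_def, hx1, Pi.add_apply, hx2, hx3, Pi.smul_apply, Pi.smul_apply, smul_eq_mul,
      smul_eq_mul]
  -- chain rules
  have hc0 : ∀ᵐ x ∂ρ, ρ.rnDeriv σ₀ x * σ₀.rnDeriv m x = ρ.rnDeriv m x :=
    hρm.ae_le (Measure.rnDeriv_mul_rnDeriv h₀)
  have hc1 : ∀ᵐ x ∂ρ, ρ.rnDeriv σ₁ x * σ₁.rnDeriv m x = ρ.rnDeriv m x :=
    hρm.ae_le (Measure.rnDeriv_mul_rnDeriv h₁)
  have hp0 : ∀ᵐ x ∂ρ, 0 < ρ.rnDeriv σ₀ x := Measure.rnDeriv_pos h₀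
  have hp1 : ∀ᵐ x ∂ρ, 0 < ρ.rnDeriv σ₁ x := Measure.rnDeriv_pos h₁
  have hpf : ∀ᵐ x ∂ρ, 0 < ρ.rnDeriv m x := Measure.rnDeriv_pos hρm
  have ht0 : ∀ᵐ x ∂ρ, ρ.rnDeriv σ₀ x < ⊤ := h₀.ae_le (Measure.rnDeriv_lt_top ρ σ₀)
  have ht1 : ∀ᵐ x ∂ρ, ρ.rnDeriv σ₁ x < ⊤ := h₁.ae_le (Measure.rnDeriv_lt_top ρ σ₁)
  have htf : ∀ᵐ x ∂ρ, ρ.rnDeriv m x < ⊤ := hρm.ae_le (Measure.rnDeriv_lt_top ρ m)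
  -- main pointwise inequality, a.e. ρ
  have hmain : ∀ᵐ x ∂ρ, llr ρ m x ≤ (1 - s) * llr ρ σ₀ x + s * llr ρ σ₁ x := by
    filter_upwards [hρm.ae_le hsum_m, hc0, hc1, hp0, hp1, hpf, ht0, ht1, htf]
      with x h1 h2 h3 p0 p1 pf t0 t1 tf
    -- finiteness and positivity of g₀ := σ₀.rnDeriv m x, etc.
    have hg0top : σ₀.rnDeriv m x ≠ ⊤ := by
      intro h
      rw [h, ENNReal.mul_top p0.ne'] at h2
      exact tf.ne h2.symm
    have hg1top : σ₁.rnDeriv m x ≠ ⊤ := by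
      intro h
      rw [h, ENNReal.mul_top p1.ne'] at h3
      exact tf.ne h3.symm
    have hg0pos : σ₀.rnDeriv m x ≠ 0 := by
      intro h
      rw [h, mul_zero] at h2
      exact pf.ne' h2.symm
    have hg1pos : σ₁.rnDeriv m x ≠ 0 := by
      intro h
      rw [h, mul_zero] at h3
      exact pf.ne' h3.symm
    set a₀ := (ρ.rnDeriv σ₀ x).toReal with ha₀
    set a₁ := (ρ.rnDeriv σ₁ x).toReal with ha₁
    set b₀ := (σ₀.rnDeriv m x).toReal with hb₀
    set b₁ := (σ₁.rnDeriv m x).toReal with hb₁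
    have ha₀pos : 0 < a₀ := ENNReal.toReal_pos p0.ne' t0.ne
    have ha₁pos : 0 < a₁ := ENNReal.toReal_pos p1.ne' t1.ne
    have hb₀pos : 0 < b₀ := ENNReal.toReal_pos hg0pos hg0top
    have hb₁pos : 0 < b₁ := ENNReal.toReal_pos hg1pos hg1top
    have hf0 : (ρ.rnDeriv m x).toReal = a₀ * b₀ := by rw [← h2, ENNReal.toReal_mul]
    have hf1 : (ρ.rnDeriv m x).toReal = a₁ * b₁ := by rw [← h3, ENNReal.toReal_mul]
    have hwt : (1 - s) * b₀ + s * b₁ = 1 := by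
      have := congrArg ENNReal.toReal h1
      rwa [ENNReal.toReal_add (ENNReal.mul_ne_top ENNReal.ofReal_ne_top hg0top)
        (ENNReal.mul_ne_top ENNReal.ofReal_ne_top hg1top), ENNReal.toReal_mul,
        ENNReal.toReal_mul, ENNReal.toReal_ofReal (by linarith), ENNReal.toReal_ofReal hs0,
        ENNReal.toReal_one] at this
    have e0 : llr ρ m x = Real.log a₀ + Real.log b₀ := by
      rw [llr, hf0, Real.log_mul ha₀pos.ne' hb₀pos.ne']
    have e1 : llr ρ m x = Real.log a₁ + Real.log b₁ := by
      rw [llr, hf1, Real.log_mul ha₁pos.ne' hb₁pos.ne']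
    have hconc : (1 - s) * Real.log b₀ + s * Real.log b₁ ≤ 0 := by
      have h := strictConcaveOn_log_Ioi.concaveOn.2 (Set.mem_Ioi.mpr hb₀pos)
        (Set.mem_Ioi.mpr hb₁pos) (by linarith : (0:ℝ) ≤ 1 - s) hs0 (by ring)
      simp only [smul_eq_mul] at h
      rw [hwt, Real.log_one] at h
      exact h
    have hA₀ : llr ρ σ₀ x = Real.log a₀ := rfl
    have hA₁ : llr ρ σ₁ x = Real.log a₁ := rfl
    have hdecomp : llr ρ m x = ((1 - s) * Real.log a₀ + s * Real.log a₁)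
        + ((1 - s) * Real.log b₀ + s * Real.log b₁) := by
      have : llr ρ m x = (1 - s) * (Real.log a₀ + Real.log b₀)
          + s * (Real.log a₁ + Real.log b₁) := by
        rw [← e0, ← e1]; ring
      rw [this]; ring
    rw [hdecomp, hA₀, hA₁]
    linarith
  -- integrability of llr ρ m
  have hWint : Integrable (fun x => (1 - s) * llr ρ σ₀ x + s * llr ρ σ₁ x) ρ :=
    (hi₀.const_mul _).add (hi₁.const_mul _)
  have hupper_m : ∀ᵐ x ∂m, ρ.rnDeriv m x ≠ 0 →
      llr ρ m x ≤ (1 - s) * llr ρ σ₀ x + s * llr ρ σ₁ x := by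
    refine (ae_withDensity_iff (Measure.measurable_rnDeriv ρ m)).mp ?_
    rwa [Measure.withDensity_rnDeriv_eq ρ m hρm]
  have hkeym : (fun x => (ρ.rnDeriv m x).toReal * llr ρ m x) ≤ᵐ[m]
      fun x => (ρ.rnDeriv m x).toReal * ((1 - s) * llr ρ σ₀ x + s * llr ρ σ₁ x) := by
    filter_upwards [hupper_m] with x hx
    rcases eq_or_ne (ρ.rnDeriv m x) 0 with h | h
    · simp [h]
    · exact mul_le_mul_of_nonneg_left (hx h) ENNReal.toReal_nonneg
  have hlowm : (fun x => (ρ.rnDeriv m x).toReal - 1)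
      ≤ᵐ[m] fun x => (ρ.rnDeriv m x).toReal * llr ρ m x :=
    Filter.Eventually.of_forall fun x => sub_one_le_mul_log ENNReal.toReal_nonneg
  have hup_int : Integrable (fun x => (ρ.rnDeriv m x).toReal
      * ((1 - s) * llr ρ σ₀ x + s * llr ρ σ₁ x)) m := by
    have := (integrable_rnDeriv_smul_iff hρm
      (f := fun x => (1 - s) * llr ρ σ₀ x + s * llr ρ σ₁ x)).mpr hWint
    simpa [smul_eq_mul] using this
  have hlow_int : Integrable (fun x => (ρ.rnDeriv m x).toReal - 1) m :=
    (Measure.integrable_toReal_rnDeriv (μ := ρ) (ν := m)).sub (integrable_const 1)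
  have hM : Integrable (fun x => (ρ.rnDeriv m x).toReal * llr ρ m x) m :=
    integrable_squeeze (((Measure.measurable_rnDeriv ρ m).ennreal_toReal.mul
      (measurable_llr ρ m)).aestronglyMeasurable) hlowm hkeym hlow_int hup_int
  have hillr : Integrable (llr ρ m) ρ :=
    (integrable_rnDeriv_smul_iff hρm (f := llr ρ m)).mp (by simpa [smul_eq_mul] using hM)
  refine ⟨hρm, hillr, ?_⟩
  calc ∫ x, llr ρ m x ∂ρ
      ≤ ∫ x, ((1 - s) * llr ρ σ₀ x + s * llr ρ σ₁ x) ∂ρ := integral_mono_ae hillr hWint hmain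
    _ = (1 - s) * ∫ x, llr ρ σ₀ x ∂ρ + s * ∫ x, llr ρ σ₁ x ∂ρ := by
        rw [integral_add (hi₀.const_mul _) (hi₁.const_mul _), integral_const_mul,
          integral_const_mul]

end KLC2


section KLdivAux

variable {Z : Type*} [MeasurableSpace Z]

lemma KLdiv_eq_ofReal {ρ σ : Measure Z} (h : ρ ≪ σ) (hi : Integrable (llr ρ σ) ρ) :
    KLdiv ρ σ = ENNReal.ofReal (∫ x, llr ρ σ x ∂ρ) := by
  unfold KLdiv
  exact if_pos ⟨h, hi⟩

lemma KLdiv_cond {ρ σ : Measure Z} (h : KLdiv ρ σ ≠ ⊤) :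
    ρ ≪ σ ∧ Integrable (llr ρ σ) ρ := by
  by_contra hc
  unfold KLdiv at h
  rw [if_neg hc] at h
  exact h rfl

lemma KLdiv_self (ρ : Measure Z) [SigmaFinite ρ] : KLdiv ρ ρ = 0 := by
  rw [KLdiv_eq_ofReal Measure.AbsolutelyContinuous.rfl (integrable_llr_self ρ),
    integral_llr_self, ENNReal.ofReal_zero]

lemma GKLdiv_eq_KLdiv (ρ σ : Measure Z) [IsProbabilityMeasure ρ] [IsProbabilityMeasure σ] :
    GKLdiv ρ σ = KLdiv ρ σ := by
  unfold GKLdiv KLdiv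
  simp [measure_univ]

lemma side_construction (σc σa : Measure Z) [IsProbabilityMeasure σc] [IsProbabilityMeasure σa]
    {ε ρ' : ℝ} (hε0 : 0 ≤ ε) (hε1 : ε ≤ 1) (hρ : 0 ≤ ρ')
    (hac_fin : KLdiv σa σc ≠ ⊤) (hac_pos : 0 < KLdiv σa σc) (hca_fin : KLdiv σc σa ≠ ⊤) :
    ∃ α : Measure Z, IsProbabilityMeasure α ∧
      KLdiv (ENNReal.ofReal (1 - ε) • σc + ENNReal.ofReal ε • σa) α ≤ ENNReal.ofReal ρ' ∧
      KLdiv σc α ≤ ENNReal.ofReal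
        (max 0 (ε - ρ' / (KLdiv σa σc).toReal) * (KLdiv σc σa).toReal) := by
  obtain ⟨hca_ac, hca_int⟩ := KLdiv_cond hca_fin
  obtain ⟨hac_ac, hac_int⟩ := KLdiv_cond hac_fin
  set Ia := ∫ x, llr σa σc x ∂σa with hIa_def
  set Ic := ∫ x, llr σc σa x ∂σc with hIc_def
  have hKLa : KLdiv σa σc = ENNReal.ofReal Ia := KLdiv_eq_ofReal hac_ac hac_int
  have hIa_pos : 0 < Ia := by
    rw [hKLa, ENNReal.ofReal_pos] at hac_pos
    exact hac_pos
  set K := (KLdiv σa σc).toReal with hK_def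
  have hK : K = Ia := by rw [hK_def, hKLa, ENNReal.toReal_ofReal hIa_pos.le]
  have hKpos : 0 < K := hK ▸ hIa_pos
  set L := (KLdiv σc σa).toReal with hL_def
  have hL : L = max Ic 0 := by
    rw [hL_def, KLdiv_eq_ofReal hca_ac hca_int, ENNReal.toReal_ofReal']
  have hIcL : Ic ≤ L := hL ▸ le_max_left _ _
  set s := max 0 (ε - ρ' / K) with hs_def
  have hs0 : 0 ≤ s := le_max_left _ _
  have hsε : s ≤ ε := max_le hε0 (by
    have : 0 ≤ ρ' / K := div_nonneg hρ hKpos.le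
    linarith)
  have hs1 : s ≤ 1 := hsε.trans hε1
  have hεs : ε - s ≤ ρ' / K := by
    have := le_max_right 0 (ε - ρ' / K)
    rw [← hs_def] at this
    linarith
  refine ⟨ENNReal.ofReal (1 - s) • σc + ENNReal.ofReal s • σa,
    isProbabilityMeasure_mix hs0 hs1 σc σa, ?_, ?_⟩
  · -- KL(μ, α) ≤ ρ'
    haveI := isProbabilityMeasure_mix hs0 hs1 σc σa
    rcases eq_or_lt_of_le hs1 with hs1e | hs1'
    · -- s = 1, hence ε = 1 and both measures are σa
      have hε_eq : ε = 1 := le_antisymm hε1 (hs1e ▸ hsε)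
      rw [hε_eq, hs1e]
      simp only [sub_self, ENNReal.ofReal_zero, zero_smul, ENNReal.ofReal_one, one_smul, zero_add]
      rw [KLdiv_self]
      exact zero_le
    · set α := ENNReal.ofReal (1 - s) • σc + ENNReal.ofReal s • σa with hα_def
      set t := (ε - s) / (1 - s) with ht_def
      have h1s : (1:ℝ) - s ≠ 0 := by linarith
      have ht0 : 0 ≤ t := div_nonneg (by linarith) (by linarith)
      have ht1 : t ≤ 1 := (div_le_one (by linarith)).mpr (by linarith)
      have htm : t * (1 - s) = ε - s := div_mul_cancel₀ _ h1s
      obtain ⟨haa, hinta, hvala⟩ := klc2 (ρ := σa) (σ₀ := σc) (σ₁ := σa) hs0 hs1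
        hac_ac hac_int Measure.AbsolutelyContinuous.rfl (integrable_llr_self σa)
      obtain ⟨hm_ac, hm_int, hm_val⟩ := klc1 (ρ₀ := α) (ρ₁ := σa) (σ := α) ht0 ht1
        Measure.AbsolutelyContinuous.rfl (integrable_llr_self α) haa hinta
      have hμeq : ENNReal.ofReal (1 - ε) • σc + ENNReal.ofReal ε • σa
          = ENNReal.ofReal (1 - t) • α + ENNReal.ofReal t • σa := by
        rw [hα_def, smul_add, smul_smul, smul_smul,
          ← ENNReal.ofReal_mul (by linarith : (0:ℝ) ≤ 1 - t),
          ← ENNReal.ofReal_mul (by linarith : (0:ℝ) ≤ 1 - t),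
          add_assoc, ← add_smul, ← ENNReal.ofReal_add (mul_nonneg (by linarith) hs0) ht0]
        have e1 : (1 - t) * (1 - s) = 1 - ε := by
          rw [sub_mul, one_mul, htm]; ring
        have e2 : (1 - t) * s + t = ε := by
          have : (1 - t) * s + t = s + t * (1 - s) := by ring
          rw [this, htm]; ring
        rw [e1, e2]
      rw [hμeq, KLdiv_eq_ofReal hm_ac hm_int]
      refine ENNReal.ofReal_le_ofReal ?_ |>.trans (le_of_eq rfl)
      calc ∫ x, llr (ENNReal.ofReal (1 - t) • α + ENNReal.ofReal t • σa) α x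
            ∂(ENNReal.ofReal (1 - t) • α + ENNReal.ofReal t • σa)
          ≤ (1 - t) * ∫ x, llr α α x ∂α + t * ∫ x, llr σa α x ∂σa := hm_val
        _ = t * ∫ x, llr σa α x ∂σa := by rw [integral_llr_self]; ring
        _ ≤ t * ((1 - s) * Ia) := by
            refine mul_le_mul_of_nonneg_left ?_ ht0
            calc ∫ x, llr σa α x ∂σa ≤ (1 - s) * Ia + s * ∫ x, llr σa σa x ∂σa := hvala
              _ = (1 - s) * Ia := by rw [integral_llr_self]; ring
        _ = (ε - s) * K := by rw [← mul_assoc, htm, hK]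
        _ ≤ (ρ' / K) * K := mul_le_mul_of_nonneg_right hεs hKpos.le
        _ = ρ' := div_mul_cancel₀ _ hKpos.ne'
  · -- KL(σc, α) ≤ s * L
    obtain ⟨hαc_ac, hαc_int, hαc_val⟩ := klc2 (ρ := σc) (σ₀ := σc) (σ₁ := σa) hs0 hs1
      Measure.AbsolutelyContinuous.rfl (integrable_llr_self σc) hca_ac hca_int
    rw [KLdiv_eq_ofReal hαc_ac hαc_int]
    refine ENNReal.ofReal_le_ofReal ?_
    calc ∫ x, llr σc (ENNReal.ofReal (1 - s) • σc + ENNReal.ofReal s • σa) x ∂σc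
        ≤ (1 - s) * ∫ x, llr σc σc x ∂σc + s * Ic := hαc_val
      _ = s * Ic := by rw [integral_llr_self]; ring
      _ ≤ s * L := mul_le_mul_of_nonneg_left hIcL hs0

end KLdivAux


/-- Theorem 1 (robustness guarantee for robust Gromov–Wasserstein under the Huber
`ε`-contamination model). -/
theorem rgw_upper_bound
    {X Y : Type*}
    [MetricSpace X] [CompleteSpace X] [SecondCountableTopology X]
    [MeasurableSpace X] [BorelSpace X]
    [MetricSpace Y] [CompleteSpace Y] [SecondCountableTopology Y]
    [MeasurableSpace Y] [BorelSpace Y]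
    (μc μa : Measure X) (νc νa : Measure Y)
    [IsProbabilityMeasure μc] [IsProbabilityMeasure μa]
    [IsProbabilityMeasure νc] [IsProbabilityMeasure νa]
    (ε₁ ε₂ : ℝ) (hε₁ : ε₁ ∈ Set.Icc (0 : ℝ) 1) (hε₂ : ε₂ ∈ Set.Icc (0 : ℝ) 1)
    (μ : Measure X) (ν : Measure Y)
    (hμ : μ = ENNReal.ofReal (1 - ε₁) • μc + ENNReal.ofReal ε₁ • μa)
    (hν : ν = ENNReal.ofReal (1 - ε₂) • νc + ENNReal.ofReal ε₂ • νa)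
    (hμac_fin : KLdiv μa μc ≠ ⊤) (hμac_pos : 0 < KLdiv μa μc)
    (hνac_fin : KLdiv νa νc ≠ ⊤) (hνac_pos : 0 < KLdiv νa νc)
    (hμca_fin : KLdiv μc μa ≠ ⊤) (hνca_fin : KLdiv νc νa ≠ ⊤)
    (ρ₁ ρ₂ τ₁ τ₂ : ℝ) (hρ₁ : 0 ≤ ρ₁) (hρ₂ : 0 ≤ ρ₂) (hτ₁ : 0 ≤ τ₁) (hτ₂ : 0 ≤ τ₂) :
    GWrob ρ₁ ρ₂ τ₁ τ₂ μ ν ≤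
      GW μc νc
      + ENNReal.ofReal (max 0 (ε₁ - ρ₁ / (KLdiv μa μc).toReal) * (τ₁ * (KLdiv μc μa).toReal))
      + ENNReal.ofReal (max 0 (ε₂ - ρ₂ / (KLdiv νa νc).toReal) * (τ₂ * (KLdiv νc νa).toReal)) := by
  obtain ⟨α, hαP, hαKL, hαc⟩ := side_construction μc μa hε₁.1 hε₁.2 hρ₁ hμac_fin hμac_pos hμca_fin
  obtain ⟨β, hβP, hβKL, hβc⟩ := side_construction νc νa hε₂.1 hε₂.2 hρ₂ hνac_fin hνac_pos hνca_fin
  haveI := hαP; haveI := hβP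
  set B₁ := ENNReal.ofReal
    (max 0 (ε₁ - ρ₁ / (KLdiv μa μc).toReal) * (τ₁ * (KLdiv μc μa).toReal)) with hB₁
  set B₂ := ENNReal.ofReal
    (max 0 (ε₂ - ρ₂ / (KLdiv νa νc).toReal) * (τ₂ * (KLdiv νc νa).toReal)) with hB₂
  have hC₁ : ENNReal.ofReal τ₁ * KLdiv μc α ≤ B₁ := by
    calc ENNReal.ofReal τ₁ * KLdiv μc α
        ≤ ENNReal.ofReal τ₁ * ENNReal.ofReal
            (max 0 (ε₁ - ρ₁ / (KLdiv μa μc).toReal) * (KLdiv μc μa).toReal) :=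
          mul_le_mul_right hαc _
      _ = B₁ := by rw [← ENNReal.ofReal_mul hτ₁, hB₁]; congr 1; ring
  have hC₂ : ENNReal.ofReal τ₂ * KLdiv νc β ≤ B₂ := by
    calc ENNReal.ofReal τ₂ * KLdiv νc β
        ≤ ENNReal.ofReal τ₂ * ENNReal.ofReal
            (max 0 (ε₂ - ρ₂ / (KLdiv νa νc).toReal) * (KLdiv νc νa).toReal) :=
          mul_le_mul_right hβc _
      _ = B₂ := by rw [← ENNReal.ofReal_mul hτ₂, hB₂]; congr 1; ring
  have hmain : ∀ (π : Measure (X × Y)) (_ : IsFiniteMeasure π),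
      π.map Prod.fst = μc → π.map Prod.snd = νc →
      Fobj τ₁ τ₂ α β ≤ GWcost π + B₁ + B₂ := by
    intro π hπ h1 h2
    have hle : Fobj τ₁ τ₂ α β ≤ GWcost π + ENNReal.ofReal τ₁ * GKLdiv (π.map Prod.fst) α
        + ENNReal.ofReal τ₂ * GKLdiv (π.map Prod.snd) β := by
      unfold Fobj
      exact iInf_le_of_le π (iInf_le_of_le hπ le_rfl)
    refine hle.trans ?_
    haveI : IsProbabilityMeasure (π.map Prod.fst) := h1 ▸ inferInstance
    haveI : IsProbabilityMeasure (π.map Prod.snd) := h2 ▸ inferInstance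
    rw [h1, h2, GKLdiv_eq_KLdiv, GKLdiv_eq_KLdiv]
    exact add_le_add (add_le_add le_rfl hC₁) hC₂
  have hstep : GWrob ρ₁ ρ₂ τ₁ τ₂ μ ν ≤ Fobj τ₁ τ₂ α β := by
    unfold GWrob
    refine iInf_le_of_le α (iInf_le_of_le hαP (iInf_le_of_le ?_ (iInf_le_of_le β
      (iInf_le_of_le hβP (iInf_le_of_le ?_ le_rfl)))))
    · rw [hμ]; exact hαKL
    · rw [hν]; exact hβKL
  refine hstep.trans ?_
  by_cases hGW : GW μc νc = ⊤
  · rw [hGW]; simp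
  refine ENNReal.le_of_forall_pos_le_add fun δ hδ _ => ?_
  have hlt2 : GW μc νc < GW μc νc + δ :=
    ENNReal.lt_add_right hGW (by exact_mod_cast hδ.ne')
  obtain ⟨π, h1, h2, hc⟩ : ∃ π : Measure (X × Y), π.map Prod.fst = μc ∧ π.map Prod.snd = νc ∧
      GWcost π < GW μc νc + δ := by
    by_contra hcon
    push_neg at hcon
    have hge : GW μc νc + ↑δ ≤ GW μc νc := by
      conv_rhs => unfold GW
      exact le_iInf fun π => le_iInf fun hπ1 => le_iInf fun hπ2 => hcon π hπ1 hπ2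
    exact absurd hge (not_le.mpr hlt2)
  haveI hπfin : IsFiniteMeasure π := by
    constructor
    have h3 : π Set.univ = 1 := by
      have := congrArg (fun m : Measure X => m Set.univ) h1
      simpa [Measure.map_apply measurable_fst MeasurableSet.univ] using this
    rw [h3]; exact ENNReal.one_lt_top
  calc Fobj τ₁ τ₂ α β ≤ GWcost π + B₁ + B₂ := hmain π hπfin h1 h2
    _ ≤ (GW μc νc + δ) + B₁ + B₂ := add_le_add (add_le_add hc.le le_rfl) le_rfl
    _ = GW μc νc + B₁ + B₂ + δ := by ring
end

section
/- Let μ_c and μ_a be Borel probability measures on a Polish space X, let ε ∈ (0,1], and set μ = (1−ε)μ_c + ε·μ_a. Assume 0 < KL(μ_a,μ_c) < ∞ and KL(μ_c,μ_a) < ∞. Then for every ρ ≥ 0 there exists a Borel probability measure α on X such that KL(μ,α) ≤ ρ and KL(μ_c,α) ≤ max(0, 1 − ρ/(ε·KL(μ_a,μ_c)))·ε·KL(μ_c,μ_a). In particular, inf{ KL(μ_c,α) : α a Borel probability measure with KL(μ,α) ≤ ρ } ≤ max(0, 1 − ρ/(ε·KL(μ_a,μ_c)))·ε·KL(μ_c,μ_a).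 -/
open MeasureTheory ENNReal Classical

section AuxReal

open Real

lemma aux_interp_pos {a t : ℝ} (ha0 : 0 ≤ a) (ha1 : a ≤ 1) (ht : 0 < t) :
    0 < (1 - a) + a * t := by
  rcases eq_or_lt_of_le ha0 with h | h
  · simp [← h]
  · nlinarith [mul_pos h ht]

lemma aux_log_interp {a t : ℝ} (ha0 : 0 ≤ a) (ha1 : a ≤ 1) (ht : 0 < t) :
    a * Real.log t ≤ Real.log ((1 - a) + a * t) := by
  have h := strictConcaveOn_log_Ioi.concaveOn.2 (Set.mem_Ioi.2 one_pos) (Set.mem_Ioi.2 ht)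
    (by linarith : (0:ℝ) ≤ 1 - a) ha0 (by ring)
  simpa using h

lemma aux_mul_log_interp {a t : ℝ} (ha0 : 0 ≤ a) (ha1 : a ≤ 1) (ht : 0 ≤ t) :
    ((1 - a) + a * t) * Real.log ((1 - a) + a * t) ≤ a * (t * Real.log t) := by
  have h := Real.convexOn_mul_log.2 (Set.mem_Ici.2 zero_le_one) (Set.mem_Ici.2 ht)
    (by linarith : (0:ℝ) ≤ 1 - a) ha0 (by ring)
  simpa using h

lemma aux_abs_log_interp {a p : ℝ} (ha0 : 0 ≤ a) (ha1 : a ≤ 1) (hp : 0 < p) :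
    |Real.log ((1 - a) + a * p)| ≤ |Real.log p| := by
  have hq : 0 < (1 - a) + a * p := aux_interp_pos ha0 ha1 hp
  rcases le_total 1 p with h | h
  · have h1 : 1 ≤ (1 - a) + a * p := by nlinarith
    have h2 : (1 - a) + a * p ≤ p := by nlinarith
    rw [abs_of_nonneg (Real.log_nonneg h1), abs_of_nonneg (Real.log_nonneg h)]
    exact Real.log_le_log hq h2
  · have h1 : p ≤ (1 - a) + a * p := by nlinarith
    have h2 : (1 - a) + a * p ≤ 1 := by nlinarith
    rw [abs_of_nonpos (Real.log_nonpos hq.le h2), abs_of_nonpos (Real.log_nonpos hp.le h)]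
    have := Real.log_le_log hp h1
    linarith

lemma aux_sub_one_le_mul_log {t : ℝ} (ht : 0 < t) : t - 1 ≤ t * Real.log t := by
  have h := Real.log_le_sub_one_of_pos (x := t⁻¹) (by positivity)
  rw [Real.log_inv] at h
  have h2 : t * (-Real.log t) ≤ t * (t⁻¹ - 1) := mul_le_mul_of_nonneg_left h ht.le
  rw [mul_sub, mul_inv_cancel₀ ht.ne'] at h2
  nlinarith

end AuxReal

/-- The construction in the proof of Theorem 1: for a Huber-contaminated measure
`μ = (1-ε)μ_c + ε μ_a`, for every `ρ ≥ 0` there is a probability measure `α` with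
`KL(μ,α) ≤ ρ` whose KL divergence from the clean measure `μ_c` is controlled; consequently
the corresponding infimum is bounded by the same quantity. -/
theorem exists_perturbed_marginal
    {X : Type*} [MetricSpace X] [CompleteSpace X] [SecondCountableTopology X]
    [MeasurableSpace X] [BorelSpace X]
    (μc μa : Measure X) [IsProbabilityMeasure μc] [IsProbabilityMeasure μa]
    (ε : ℝ) (hε : ε ∈ Set.Ioc (0 : ℝ) 1)
    (μ : Measure X) (hμ : μ = ENNReal.ofReal (1 - ε) • μc + ENNReal.ofReal ε • μa)
    (hfin : KLdiv μa μc ≠ ⊤) (hpos : 0 < KLdiv μa μc) (hfin' : KLdiv μc μa ≠ ⊤)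
    (ρ : ℝ) (hρ : 0 ≤ ρ) :
    (∃ α : Measure X, IsProbabilityMeasure α ∧ KLdiv μ α ≤ ENNReal.ofReal ρ ∧
        KLdiv μc α ≤ ENNReal.ofReal
          (max 0 (1 - ρ / (ε * (KLdiv μa μc).toReal)) * (ε * (KLdiv μc μa).toReal))) ∧
      (⨅ (α : Measure X) (_ : IsProbabilityMeasure α) (_ : KLdiv μ α ≤ ENNReal.ofReal ρ),
          KLdiv μc α) ≤ ENNReal.ofReal
          (max 0 (1 - ρ / (ε * (KLdiv μa μc).toReal)) * (ε * (KLdiv μc μa).toReal)) := by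
  obtain ⟨hε0, hε1⟩ := hε
  -- unpack finiteness hypotheses
  have hA : μa ≪ μc ∧ Integrable (llr μa μc) μa := by
    by_contra h; rw [KLdiv, if_neg h] at hfin; exact hfin rfl
  have hC : μc ≪ μa ∧ Integrable (llr μc μa) μc := by
    by_contra h; rw [KLdiv, if_neg h] at hfin'; exact hfin' rfl
  obtain ⟨hac, hIa⟩ := hA
  obtain ⟨hca, hIc⟩ := hC
  have hKL_a : KLdiv μa μc = ENNReal.ofReal (∫ x, llr μa μc x ∂μa) := by
    rw [KLdiv, if_pos ⟨hac, hIa⟩]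
  have hKL_c : KLdiv μc μa = ENNReal.ofReal (∫ x, llr μc μa x ∂μc) := by
    rw [KLdiv, if_pos ⟨hca, hIc⟩]
  set K : ℝ := ∫ x, llr μa μc x ∂μa with hKdef
  set L : ℝ := ∫ x, llr μc μa x ∂μc with hLdef
  have hKpos : 0 < K := by
    rw [hKL_a] at hpos; exact ENNReal.ofReal_pos.mp hpos
  have hKa_toReal : (KLdiv μa μc).toReal = K := by
    rw [hKL_a, ENNReal.toReal_ofReal hKpos.le]
  set L' : ℝ := (KLdiv μc μa).toReal with hL'def
  have hL'0 : 0 ≤ L' := ENNReal.toReal_nonneg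
  have hLL' : L ≤ L' := by
    rcases le_total 0 L with h | h
    · rw [hL'def, hKL_c, ENNReal.toReal_ofReal h]
    · exact h.trans hL'0
  -- the mixing parameter
  set lam : ℝ := max 0 (1 - ρ / (ε * K)) with hlamdef
  have hlam0 : 0 ≤ lam := le_max_left _ _
  have hεK : 0 < ε * K := mul_pos hε0 hKpos
  have hlam1 : lam ≤ 1 := by
    apply max_le (by norm_num)
    have : 0 ≤ ρ / (ε * K) := div_nonneg hρ hεK.le
    linarith
  have hlamρ : (1 - lam) * (ε * K) ≤ ρ := by
    have h1 : 1 - ρ / (ε * K) ≤ lam := le_max_right _ _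
    have h2 : 1 - lam ≤ ρ / (ε * K) := by linarith
    calc (1 - lam) * (ε * K) ≤ (ρ / (ε * K)) * (ε * K) :=
          mul_le_mul_of_nonneg_right h2 hεK.le
      _ = ρ := div_mul_cancel₀ _ hεK.ne'
  -- probability instances
  haveI hμprob : IsProbabilityMeasure μ := by
    constructor
    rw [hμ]
    simp only [Measure.coe_add, Pi.add_apply, Measure.smul_apply, smul_eq_mul, measure_univ,
      mul_one]
    rw [← ENNReal.ofReal_add (by linarith) hε0.le]
    norm_num
  set α : Measure X := ENNReal.ofReal (1 - lam) • μc + ENNReal.ofReal lam • μ with hαdef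
  haveI hαprob : IsProbabilityMeasure α := by
    constructor
    rw [hαdef]
    simp only [Measure.coe_add, Pi.add_apply, Measure.smul_apply, smul_eq_mul, measure_univ,
      mul_one]
    rw [← ENNReal.ofReal_add (by linarith) hlam0]
    norm_num
  -- absolute continuity relations
  have hμμc : μ ≪ μc := by
    apply Measure.AbsolutelyContinuous.mk
    intro s hms hs
    rw [hμ]
    simp [Measure.coe_add, Measure.smul_apply, hs, hac hs]
  have hμcμ : μc ≪ μ := by
    apply Measure.AbsolutelyContinuous.mk
    intro s hms hs
    rw [hμ] at hs
    simp only [Measure.coe_add, Pi.add_apply, Measure.smul_apply, smul_eq_mul,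
      add_eq_zero, mul_eq_zero] at hs
    have hμa0 : μa s = 0 := by
      rcases hs.2 with h | h
      · exact absurd h (by simp [ENNReal.ofReal_eq_zero, not_le, hε0])
      · exact h
    exact hca hμa0
  have hαμc : α ≪ μc := by
    apply Measure.AbsolutelyContinuous.mk
    intro s hms hs
    rw [hαdef]
    simp [Measure.coe_add, Measure.smul_apply, hs, hμμc hs]
  have hμcα : μc ≪ α := by
    apply Measure.AbsolutelyContinuous.mk
    intro s hms hs
    rw [hαdef] at hs
    simp only [Measure.coe_add, Pi.add_apply, Measure.smul_apply, smul_eq_mul,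
      add_eq_zero, mul_eq_zero] at hs
    rcases lt_or_eq_of_le hlam1 with hl | hl
    · rcases hs.1 with h | h
      · exact absurd h (by simp [ENNReal.ofReal_eq_zero, not_le]; linarith)
      · exact h
    · rcases hs.2 with h | h
      · exact absurd h (by simp [ENNReal.ofReal_eq_zero, not_le]; linarith)
      · exact hμcμ h
  have hμα : μ ≪ α := hμμc.trans hμcα
  -- densities
  set d : X → ℝ≥0∞ := μa.rnDeriv μc with hddef
  set D : X → ℝ := fun x => (d x).toReal with hDdef
  set P : X → ℝ := fun x => (1 - ε) + ε * D x with hPdef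
  set Q : X → ℝ := fun x => (1 - lam) + lam * P x with hQdef
  have hmD : Measurable D := (Measure.measurable_rnDeriv _ _).ennreal_toReal
  have hmP : Measurable P := (hmD.const_mul ε).const_add (1 - ε)
  have hmQ : Measurable Q := (hmP.const_mul lam).const_add (1 - lam)
  haveI : SigmaFinite (ENNReal.ofReal (1 - ε) • μc) := by
    have : IsFiniteMeasure (ENNReal.ofReal (1 - ε) • μc) := by
      constructor; simp [Measure.smul_apply, lt_top_iff_ne_top]
    infer_instance
  haveI : SigmaFinite (ENNReal.ofReal ε • μa) := by
    have : IsFiniteMeasure (ENNReal.ofReal ε • μa) := by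
      constructor; simp [Measure.smul_apply, lt_top_iff_ne_top]
    infer_instance
  haveI : SigmaFinite (ENNReal.ofReal (1 - lam) • μc) := by
    have : IsFiniteMeasure (ENNReal.ofReal (1 - lam) • μc) := by
      constructor; simp [Measure.smul_apply, lt_top_iff_ne_top]
    infer_instance
  haveI : SigmaFinite (ENNReal.ofReal lam • μ) := by
    have : IsFiniteMeasure (ENNReal.ofReal lam • μ) := by
      constructor; simp [Measure.smul_apply, lt_top_iff_ne_top]
    infer_instance
  have h_rnμ : μ.rnDeriv μc =ᵐ[μc]
      fun x => ENNReal.ofReal (1 - ε) + ENNReal.ofReal ε * d x := by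
    rw [hμ]
    have h1 := Measure.rnDeriv_add' (ENNReal.ofReal (1 - ε) • μc) (ENNReal.ofReal ε • μa) μc
    have h2 := Measure.rnDeriv_smul_left_of_ne_top' μc μc
      (r := ENNReal.ofReal (1 - ε)) ENNReal.ofReal_ne_top
    have h3 := Measure.rnDeriv_smul_left_of_ne_top' μa μc
      (r := ENNReal.ofReal ε) ENNReal.ofReal_ne_top
    have h4 := Measure.rnDeriv_self μc
    filter_upwards [h1, h2, h3, h4] with x hx1 hx2 hx3 hx4
    rw [hx1, Pi.add_apply, hx2, hx3, Pi.smul_apply, Pi.smul_apply, hx4, smul_eq_mul,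
      smul_eq_mul, mul_one]
  have h_rnα : α.rnDeriv μc =ᵐ[μc]
      fun x => ENNReal.ofReal (1 - lam) + ENNReal.ofReal lam * μ.rnDeriv μc x := by
    rw [hαdef]
    have h1 := Measure.rnDeriv_add' (ENNReal.ofReal (1 - lam) • μc) (ENNReal.ofReal lam • μ) μc
    have h2 := Measure.rnDeriv_smul_left_of_ne_top' μc μc
      (r := ENNReal.ofReal (1 - lam)) ENNReal.ofReal_ne_top
    have h3 := Measure.rnDeriv_smul_left_of_ne_top' μ μc
      (r := ENNReal.ofReal lam) ENNReal.ofReal_ne_top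
    have h4 := Measure.rnDeriv_self μc
    filter_upwards [h1, h2, h3, h4] with x hx1 hx2 hx3 hx4
    rw [hx1, Pi.add_apply, hx2, hx3, Pi.smul_apply, Pi.smul_apply, hx4, smul_eq_mul,
      smul_eq_mul, mul_one]
  -- main pointwise a.e. facts
  have h_dpos : ∀ᵐ x ∂μc, 0 < d x := Measure.rnDeriv_pos' hca
  have h_dlt : ∀ᵐ x ∂μc, d x < ⊤ := Measure.rnDeriv_lt_top μa μc
  have h_main : ∀ᵐ x ∂μc, 0 < D x ∧ 0 < P x ∧ 0 < Q x ∧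
      (μ.rnDeriv μc x).toReal = P x ∧ μ.rnDeriv μc x ≠ ⊤ ∧
      (α.rnDeriv μc x).toReal = Q x ∧ α.rnDeriv μc x ≠ 0 ∧ α.rnDeriv μc x ≠ ⊤ := by
    filter_upwards [h_dpos, h_dlt, h_rnμ, h_rnα] with x hx0 hxlt hxμ hxα
    have hD0 : 0 < D x := ENNReal.toReal_pos hx0.ne' hxlt.ne
    have hP0 : 0 < P x := by
      have : 0 < ε * D x := mul_pos hε0 hD0
      simp only [hPdef]; linarith
    have hQ0 : 0 < Q x := aux_interp_pos hlam0 hlam1 hP0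
    have hμne : μ.rnDeriv μc x ≠ ⊤ := by
      rw [hxμ]
      exact ENNReal.add_ne_top.2 ⟨ENNReal.ofReal_ne_top,
        ENNReal.mul_ne_top ENNReal.ofReal_ne_top hxlt.ne⟩
    have hμtor : (μ.rnDeriv μc x).toReal = P x := by
      rw [hxμ, ENNReal.toReal_add ENNReal.ofReal_ne_top
        (ENNReal.mul_ne_top ENNReal.ofReal_ne_top hxlt.ne), ENNReal.toReal_mul,
        ENNReal.toReal_ofReal (by linarith), ENNReal.toReal_ofReal hε0.le]
    have hαne : α.rnDeriv μc x ≠ ⊤ := by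
      rw [hxα]
      exact ENNReal.add_ne_top.2 ⟨ENNReal.ofReal_ne_top,
        ENNReal.mul_ne_top ENNReal.ofReal_ne_top hμne⟩
    have hαtor : (α.rnDeriv μc x).toReal = Q x := by
      rw [hxα, ENNReal.toReal_add ENNReal.ofReal_ne_top
        (ENNReal.mul_ne_top ENNReal.ofReal_ne_top hμne), ENNReal.toReal_mul,
        ENNReal.toReal_ofReal (by linarith), ENNReal.toReal_ofReal hlam0, hμtor]
    have hαne0 : α.rnDeriv μc x ≠ 0 := by
      intro h
      rw [h] at hαtor
      simp at hαtor
      exact absurd hαtor.symm hQ0.ne'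
    exact ⟨hD0, hP0, hQ0, hμtor, hμne, hαtor, hαne0, hαne⟩
  -- log-likelihood ratios as real functions
  have h_llr_μα : llr μ α =ᵐ[μc] fun x => Real.log (P x) - Real.log (Q x) := by
    have hh := Measure.rnDeriv_mul_rnDeriv hμα (κ := μc)
    filter_upwards [hh, h_main] with x hx ⟨hD0, hP0, hQ0, hμtor, hμne, hαtor, hαne0, hαne⟩
    have hμαne : μ.rnDeriv α x ≠ ⊤ := by
      intro h
      rw [Pi.mul_apply, h, ENNReal.top_mul hαne0] at hx
      exact hμne hx.symm
    have htor : (μ.rnDeriv α x).toReal * Q x = P x := by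
      rw [← hαtor, ← hμtor, ← ENNReal.toReal_mul, ← Pi.mul_apply, hx]
    have : (μ.rnDeriv α x).toReal = P x / Q x := by
      field_simp at htor ⊢
      linarith
    rw [llr, this, Real.log_div hP0.ne' hQ0.ne']
  have h_llr_μcα : llr μc α =ᵐ[μc] fun x => - Real.log (Q x) := by
    have hh := Measure.rnDeriv_mul_rnDeriv hμcα (κ := μc)
    have h4 := Measure.rnDeriv_self μc
    filter_upwards [hh, h4, h_main] with x hx hx4 ⟨hD0, hP0, hQ0, hμtor, hμne, hαtor, hαne0, hαne⟩
    have hμαne : μc.rnDeriv α x ≠ ⊤ := by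
      intro h
      rw [Pi.mul_apply, h, ENNReal.top_mul hαne0] at hx
      rw [hx4] at hx
      exact absurd hx.symm (by simp)
    have htor : (μc.rnDeriv α x).toReal * Q x = 1 := by
      rw [← hαtor, ← ENNReal.toReal_mul, ← Pi.mul_apply, hx, hx4]
      simp
    have : (μc.rnDeriv α x).toReal = 1 / Q x := by
      field_simp at htor ⊢
      linarith
    rw [llr, this, one_div, Real.log_inv]
  have h_llr_ca : llr μc μa =ᵐ[μc] fun x => - Real.log (D x) := by
    have hh := Measure.inv_rnDeriv hca
    filter_upwards [hh, h_dpos, h_dlt] with x hx hx0 hxlt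
    have h1 : μc.rnDeriv μa x = (μa.rnDeriv μc x)⁻¹ := by
      rw [← hx]; simp
    simp only [llr, h1, ENNReal.toReal_inv, Real.log_inv, hDdef, hddef]
  -- integrability and integral identities
  have hIntD : Integrable D μc := by
    have := Measure.integrable_toReal_rnDeriv (μ := μa) (ν := μc)
    simpa [hDdef, hddef] using this
  have hIntlogD : Integrable (fun x => Real.log (D x)) μc := by
    have h := (hIc.congr h_llr_ca).neg
    apply h.congr
    filter_upwards [] with x
    simp
  have hL_eq : L = ∫ x, - Real.log (D x) ∂μc := integral_congr_ae h_llr_ca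
  have hIntDlogD : Integrable (fun x => D x * Real.log (D x)) μc := by
    have h := (integrable_rnDeriv_smul_iff hac).mpr hIa
    simpa [llr, smul_eq_mul, hDdef, hddef] using h
  have hK_eq : K = ∫ x, D x * Real.log (D x) ∂μc := by
    rw [hKdef, ← integral_rnDeriv_smul hac]
    simp [llr, smul_eq_mul, hDdef, hddef]
  have hIntP : Integrable P μc := (integrable_const (1 - ε)).add (hIntD.const_mul ε)
  have hIntQ : Integrable Q μc := (integrable_const (1 - lam)).add (hIntP.const_mul lam)
  have hIntPlogP : Integrable (fun x => P x * Real.log (P x)) μc := by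
    refine Integrable.mono' (((hIntP.sub (integrable_const 1)).abs).add
      ((hIntDlogD.const_mul ε).abs)) ((hmP.mul hmP.log).aestronglyMeasurable) ?_
    filter_upwards [h_main] with x ⟨hD0, hP0, _, _, _, _, _, _⟩
    have hlow : P x - 1 ≤ P x * Real.log (P x) := aux_sub_one_le_mul_log hP0
    have hup : P x * Real.log (P x) ≤ ε * (D x * Real.log (D x)) :=
      aux_mul_log_interp hε0.le hε1 hD0.le
    rw [Real.norm_eq_abs, abs_le]
    constructor
    · have := neg_abs_le (P x - 1)
      have h2 := abs_nonneg (ε * (D x * Real.log (D x)))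
      simp only [Pi.add_apply, Pi.abs_apply, Pi.sub_apply]
      linarith
    · have := le_abs_self (ε * (D x * Real.log (D x)))
      have h2 := abs_nonneg (P x - 1)
      simp only [Pi.add_apply, Pi.abs_apply, Pi.sub_apply]
      linarith
  have hIntlogQ : Integrable (fun x => Real.log (Q x)) μc := by
    refine Integrable.mono' (((hIntQ.sub (integrable_const 1)).abs).add
      ((hIntlogD.const_mul (lam * ε)).abs)) (hmQ.log.aestronglyMeasurable) ?_
    filter_upwards [h_main] with x ⟨hD0, hP0, hQ0, _, _, _, _, _⟩
    have hup : Real.log (Q x) ≤ Q x - 1 := Real.log_le_sub_one_of_pos hQ0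
    have hlowP : ε * Real.log (D x) ≤ Real.log (P x) := aux_log_interp hε0.le hε1 hD0
    have hlowQ : lam * Real.log (P x) ≤ Real.log (Q x) := aux_log_interp hlam0 hlam1 hP0
    have hlow : lam * ε * Real.log (D x) ≤ Real.log (Q x) := by
      have := mul_le_mul_of_nonneg_left hlowP hlam0
      calc lam * ε * Real.log (D x) = lam * (ε * Real.log (D x)) := by ring
        _ ≤ lam * Real.log (P x) := this
        _ ≤ Real.log (Q x) := hlowQ
    rw [Real.norm_eq_abs, abs_le]
    constructor
    · have := neg_abs_le (lam * ε * Real.log (D x))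
      have h2 := abs_nonneg (Q x - 1)
      simp only [Pi.add_apply, Pi.abs_apply, Pi.sub_apply]
      linarith
    · have := le_abs_self (Q x - 1)
      have h2 := abs_nonneg (lam * ε * Real.log (D x))
      simp only [Pi.add_apply, Pi.abs_apply, Pi.sub_apply]
      linarith
  have hIntPlogQ : Integrable (fun x => P x * Real.log (Q x)) μc := by
    refine Integrable.mono' hIntPlogP.abs ((hmP.mul hmQ.log).aestronglyMeasurable) ?_
    filter_upwards [h_main] with x ⟨hD0, hP0, hQ0, _, _, _, _, _⟩
    have habs : |Real.log (Q x)| ≤ |Real.log (P x)| :=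
      aux_abs_log_interp hlam0 hlam1 hP0
    calc ‖P x * Real.log (Q x)‖ = |P x| * |Real.log (Q x)| := by
          rw [Real.norm_eq_abs, abs_mul]
      _ ≤ |P x| * |Real.log (P x)| := mul_le_mul_of_nonneg_left habs (abs_nonneg _)
      _ = |P x * Real.log (P x)| := (abs_mul _ _).symm
  -- integrability of llr μ α w.r.t. μ and value
  have hIntf : Integrable (fun x => P x * (Real.log (P x) - Real.log (Q x))) μc := by
    apply (hIntPlogP.sub hIntPlogQ).congr
    filter_upwards [] with x
    simp only [Pi.sub_apply]
    ring
  have hIntegr_llrμα : Integrable (llr μ α) μ := by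
    rw [← integrable_rnDeriv_smul_iff hμμc]
    apply hIntf.congr
    filter_upwards [h_main, h_llr_μα] with x ⟨hD0, hP0, hQ0, hμtor, _, _, _, _⟩ hllr
    rw [smul_eq_mul, hμtor, hllr]
  have hiμα : ∫ x, llr μ α x ∂μ = ∫ x, P x * (Real.log (P x) - Real.log (Q x)) ∂μc := by
    rw [← integral_rnDeriv_smul hμμc]
    apply integral_congr_ae
    filter_upwards [h_main, h_llr_μα] with x ⟨hD0, hP0, hQ0, hμtor, _, _, _, _⟩ hllr
    rw [smul_eq_mul, hμtor, hllr]
  -- first bound : ∫ llr μ α dμ ≤ ρ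
  have hbound1 : ∫ x, llr μ α x ∂μ ≤ ρ := by
    rw [hiμα]
    have step1 : ∫ x, P x * (Real.log (P x) - Real.log (Q x)) ∂μc
        ≤ ∫ x, (1 - lam) * (P x * Real.log (P x)) ∂μc := by
      apply integral_mono_ae hIntf (hIntPlogP.const_mul (1 - lam))
      filter_upwards [h_main] with x ⟨hD0, hP0, hQ0, _, _, _, _, _⟩
      have hlog : lam * Real.log (P x) ≤ Real.log (Q x) := aux_log_interp hlam0 hlam1 hP0
      nlinarith [mul_le_mul_of_nonneg_left hlog hP0.le]
    have step2 : ∫ x, (1 - lam) * (P x * Real.log (P x)) ∂μc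
        = (1 - lam) * ∫ x, P x * Real.log (P x) ∂μc := integral_const_mul _ _
    have step3 : ∫ x, P x * Real.log (P x) ∂μc ≤ ε * K := by
      calc ∫ x, P x * Real.log (P x) ∂μc ≤ ∫ x, ε * (D x * Real.log (D x)) ∂μc := by
            apply integral_mono_ae hIntPlogP (hIntDlogD.const_mul ε)
            filter_upwards [h_main] with x ⟨hD0, _, _, _, _, _, _, _⟩
            exact aux_mul_log_interp hε0.le hε1 hD0.le
        _ = ε * ∫ x, D x * Real.log (D x) ∂μc := integral_const_mul _ _
        _ = ε * K := by rw [← hK_eq]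
    have h1lam : 0 ≤ 1 - lam := by linarith
    calc ∫ x, P x * (Real.log (P x) - Real.log (Q x)) ∂μc
        ≤ (1 - lam) * ∫ x, P x * Real.log (P x) ∂μc := by rw [← step2]; exact step1
      _ ≤ (1 - lam) * (ε * K) := mul_le_mul_of_nonneg_left step3 h1lam
      _ ≤ ρ := hlamρ
  -- second bound : ∫ llr μc α dμc ≤ lam * (ε * L)
  have hIntllr_cα : Integrable (llr μc α) μc := hIntlogQ.neg.congr h_llr_μcα.symm
  have hbound2 : ∫ x, llr μc α x ∂μc ≤ lam * ε * L := by
    rw [integral_congr_ae h_llr_μcα]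
    calc ∫ x, - Real.log (Q x) ∂μc ≤ ∫ x, lam * ε * (- Real.log (D x)) ∂μc := by
          apply integral_mono_ae hIntlogQ.neg ((hIntlogD.neg).const_mul (lam * ε))
          filter_upwards [h_main] with x ⟨hD0, hP0, hQ0, _, _, _, _, _⟩
          have hlowP : ε * Real.log (D x) ≤ Real.log (P x) := aux_log_interp hε0.le hε1 hD0
          have hlowQ : lam * Real.log (P x) ≤ Real.log (Q x) := aux_log_interp hlam0 hlam1 hP0
          have := mul_le_mul_of_nonneg_left hlowP hlam0
          simp only [Pi.neg_apply]
          nlinarith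
      _ = lam * ε * ∫ x, - Real.log (D x) ∂μc := integral_const_mul _ _
      _ = lam * ε * L := by rw [← hL_eq]
  -- KL values
  have hKLμα : KLdiv μ α = ENNReal.ofReal (∫ x, llr μ α x ∂μ) := by
    rw [KLdiv, if_pos ⟨hμα, hIntegr_llrμα⟩]
  have hKLcα : KLdiv μc α = ENNReal.ofReal (∫ x, llr μc α x ∂μc) := by
    rw [KLdiv, if_pos ⟨hμcα, hIntllr_cα⟩]
  have goal1 : KLdiv μ α ≤ ENNReal.ofReal ρ := by
    rw [hKLμα]; exact ENNReal.ofReal_le_ofReal hbound1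
  have goal2 : KLdiv μc α ≤ ENNReal.ofReal
      (max 0 (1 - ρ / (ε * (KLdiv μa μc).toReal)) * (ε * (KLdiv μc μa).toReal)) := by
    rw [hKLcα, hKa_toReal]
    apply ENNReal.ofReal_le_ofReal
    have h1 : lam * ε * L ≤ lam * (ε * L') := by
      have := mul_le_mul_of_nonneg_left hLL' (mul_nonneg hlam0 hε0.le)
      calc lam * ε * L = lam * ε * L := rfl
        _ ≤ lam * ε * L' := mul_le_mul_of_nonneg_left hLL' (mul_nonneg hlam0 hε0.le)
        _ = lam * (ε * L') := by ring
    exact hbound2.trans h1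
  refine ⟨⟨α, hαprob, goal1, goal2⟩, ?_⟩
  calc (⨅ (β : Measure X) (_ : IsProbabilityMeasure β) (_ : KLdiv μ β ≤ ENNReal.ofReal ρ),
      KLdiv μc β) ≤ KLdiv μc α := by
        refine iInf_le_of_le α ?_
        refine iInf_le_of_le hαprob ?_
        exact iInf_le _ goal1
    _ ≤ _ := goal2
end

section
/- Let n ≥ 1, let a ∈ ℝ^n with a_i ≥ 0, let b, μ ∈ Δ^n with all entries strictly positive, and let c > 0 and w ≥ 0. Define, for α ∈ Δ^n with all entries strictly positive, G(α) = ∑_i (a_i log(a_i/α_i) − a_i + α_i) + (1/c)·∑_i b_i log(b_i/α_i) + w·∑_i μ_i log(μ_i/α_i) (with the convention 0·log 0 = 0). Then the vector α̂ defined by α̂_i = (a_i + b_i/c + w·μ_i)/(∑_j a_j + 1/c + w) has strictly positive entries, lies in Δ^n, and satisfies G(α̂) ≤ G(α) for every α ∈ Δ^n with all entries strictly positive. -/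
open Finset

/-- Closed-form solution of the penalized `α`-subproblem: `α̂` is feasible (strictly positive
entries, lies in the simplex) and minimizes `G` over the strictly positive simplex. -/
theorem alpha_subproblem_closed_form
    (n : ℕ) (hn : 1 ≤ n) (a b μ : Fin n → ℝ)
    (ha : ∀ i, 0 ≤ a i)
    (hb : ∀ i, 0 < b i) (hbsum : ∑ i, b i = 1)
    (hμ : ∀ i, 0 < μ i) (hμsum : ∑ i, μ i = 1)
    (c w : ℝ) (hc : 0 < c) (hw : 0 ≤ w)
    (G : (Fin n → ℝ) → ℝ)
    (hG : G = fun α => ∑ i, (a i * Real.log (a i / α i) - a i + α i)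
      + (1 / c) * ∑ i, b i * Real.log (b i / α i)
      + w * ∑ i, μ i * Real.log (μ i / α i))
    (αhat : Fin n → ℝ)
    (hαhat : αhat = fun i => (a i + b i / c + w * μ i) / ((∑ j, a j) + 1 / c + w)) :
    (∀ i, 0 < αhat i) ∧ (∑ i, αhat i = 1) ∧
      ∀ α : Fin n → ℝ, (∀ i, 0 < α i) → (∑ i, α i = 1) → G αhat ≤ G α := by
  have haS : 0 ≤ ∑ j, a j := Finset.sum_nonneg fun i _ => ha i
  have hcinv : 0 < 1 / c := by positivity
  have hS : 0 < (∑ j, a j) + 1 / c + w := by linarith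
  set S := (∑ j, a j) + 1 / c + w with hSdef
  set m : Fin n → ℝ := fun i => a i + b i / c + w * μ i with hmdef
  have hm : ∀ i, 0 < m i := by
    intro i
    have h1 : 0 < b i / c := div_pos (hb i) hc
    have h2 : 0 ≤ w * μ i := mul_nonneg hw (hμ i).le
    have := ha i
    simp only [hmdef]
    linarith
  have hαm : ∀ i, αhat i = m i / S := by
    intro i; rw [hαhat]
  have hpos : ∀ i, 0 < αhat i := fun i => by
    rw [hαm i]; exact div_pos (hm i) hS
  have hmsum : ∑ i, m i = S := by
    simp only [hmdef, hSdef]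
    rw [Finset.sum_add_distrib, Finset.sum_add_distrib, ← Finset.sum_div, hbsum,
      ← Finset.mul_sum, hμsum, mul_one]
  have hsum : ∑ i, αhat i = 1 := by
    simp only [hαm, ← Finset.sum_div, hmsum, div_self hS.ne']
  refine ⟨hpos, hsum, ?_⟩
  intro α hα hαsum
  -- expansion of G as a single sum
  have expand : ∀ β : Fin n → ℝ, (∀ i, 0 < β i) →
      G β = ∑ i, ((a i * Real.log (a i) - a i + β i)
        + (1 / c) * (b i * Real.log (b i))
        + w * (μ i * Real.log (μ i))
        - m i * Real.log (β i)) := by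
    intro β hβ
    rw [hG]
    simp only [Finset.mul_sum, ← Finset.sum_add_distrib, ← Finset.sum_sub_distrib]
    refine Finset.sum_congr rfl fun i _ => ?_
    have h2 : b i * Real.log (b i / β i) = b i * Real.log (b i) - b i * Real.log (β i) := by
      rw [Real.log_div (hb i).ne' (hβ i).ne', mul_sub]
    have h3 : μ i * Real.log (μ i / β i) = μ i * Real.log (μ i) - μ i * Real.log (β i) := by
      rw [Real.log_div (hμ i).ne' (hβ i).ne', mul_sub]
    have h1 : a i * Real.log (a i / β i) = a i * Real.log (a i) - a i * Real.log (β i) := by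
      rcases eq_or_lt_of_le (ha i) with h | h
      · simp [← h]
      · rw [Real.log_div h.ne' (hβ i).ne', mul_sub]
    rw [h1, h2, h3]
    simp only [hmdef]
    have hc' : c ≠ 0 := hc.ne'
    field_simp
    ring
  have hdiff : G α - G αhat
      = ∑ i, (α i - αhat i + m i * (Real.log (αhat i) - Real.log (α i))) := by
    rw [expand α hα, expand αhat hpos, ← Finset.sum_sub_distrib]
    refine Finset.sum_congr rfl fun i _ => ?_
    ring
  clear_value m S
  have bound : ∀ i ∈ Finset.univ (α := Fin n),
      m i * (Real.log (α i) - Real.log (αhat i)) ≤ S * α i - m i := by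
    intro i _
    have h1 : Real.log (α i) - Real.log (αhat i) = Real.log (α i / αhat i) :=
      (Real.log_div (hα i).ne' (hpos i).ne').symm
    have h2 : Real.log (α i / αhat i) ≤ α i / αhat i - 1 :=
      Real.log_le_sub_one_of_pos (div_pos (hα i) (hpos i))
    have h3 : m i * (α i / αhat i - 1) = S * α i - m i := by
      rw [hαm i]
      field_simp [(hm i).ne']
    calc m i * (Real.log (α i) - Real.log (αhat i))
        = m i * Real.log (α i / αhat i) := by rw [h1]
      _ ≤ m i * (α i / αhat i - 1) := by
          exact mul_le_mul_of_nonneg_left h2 (hm i).le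
      _ = S * α i - m i := h3
  have hsum_bound : ∑ i, m i * (Real.log (α i) - Real.log (αhat i)) ≤ 0 := by
    calc ∑ i, m i * (Real.log (α i) - Real.log (αhat i))
        ≤ ∑ i, (S * α i - m i) := Finset.sum_le_sum bound
      _ = S * (∑ i, α i) - ∑ i, m i := by
          rw [Finset.sum_sub_distrib, Finset.mul_sum]
      _ = 0 := by rw [hαsum, hmsum]; ring
  have hfinal : 0 ≤ G α - G αhat := by
    rw [hdiff]
    have : ∑ i, (α i - αhat i + m i * (Real.log (αhat i) - Real.log (α i)))
        = (∑ i, α i) - (∑ i, αhat i)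
          - ∑ i, m i * (Real.log (α i) - Real.log (αhat i)) := by
      rw [← Finset.sum_sub_distrib, ← Finset.sum_sub_distrib]
      refine Finset.sum_congr rfl fun i _ => ?_
      ring
    rw [this, hαsum, hsum]
    linarith
  linarith
end

section
/- Let n ≥ 1, let a ∈ ℝ^n with a_i ≥ 0, let b, μ ∈ Δ^n with all entries strictly positive, and let c > 0 and ρ > 0. For w ≥ 0 define α̂(w) ∈ Δ^n by α̂(w)_i = (a_i + b_i/c + w·μ_i)/(∑_j a_j + 1/c + w), and p(w) = ∑_i μ_i log(μ_i/α̂(w)_i) − ρ. Define H(α) = ∑_i (a_i log(a_i/α_i) − a_i + α_i) + (1/c)·∑_i b_i log(b_i/α_i) (with convention 0·log 0 = 0). If either (i) w = 0 and p(0) ≤ 0, or (ii) w > 0 and p(w) = 0, then α̂(w) minimizes H over the feasible set {α ∈ Δ^n : all α_i > 0 and ∑_i μ_i log(μ_i/α_i) ≤ ρ}, i.e., H(α̂(w)) ≤ H(α) for every α in this set. -/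
open Finset

/-- Optimality of the dual multiplier for the `α`-subproblem: if `w = 0` with `p(0) ≤ 0`,
or `w > 0` with `p(w) = 0`, then `α̂(w)` minimizes `H` over the KL-constrained simplex. -/
theorem alpha_subproblem_dual_optimality
    (n : ℕ) (hn : 1 ≤ n) (a b μ : Fin n → ℝ)
    (ha : ∀ i, 0 ≤ a i)
    (hb : ∀ i, 0 < b i) (hbsum : ∑ i, b i = 1)
    (hμ : ∀ i, 0 < μ i) (hμsum : ∑ i, μ i = 1)
    (c ρ : ℝ) (hc : 0 < c) (hρ : 0 < ρ)
    (αhat : ℝ → Fin n → ℝ)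
    (hαhat : αhat = fun w i => (a i + b i / c + w * μ i) / ((∑ j, a j) + 1 / c + w))
    (p : ℝ → ℝ)
    (hp : p = fun w => (∑ i, μ i * Real.log (μ i / αhat w i)) - ρ)
    (H : (Fin n → ℝ) → ℝ)
    (hH : H = fun α => ∑ i, (a i * Real.log (a i / α i) - a i + α i)
      + (1 / c) * ∑ i, b i * Real.log (b i / α i))
    (w : ℝ) (hw : (w = 0 ∧ p 0 ≤ 0) ∨ (0 < w ∧ p w = 0)) :
    ∀ α : Fin n → ℝ, (∀ i, 0 < α i) → (∑ i, α i = 1) →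
      (∑ i, μ i * Real.log (μ i / α i)) ≤ ρ → H (αhat w) ≤ H α := by
  intro α hαpos hαsum hαfeas
  have hw0 : 0 ≤ w := by
    rcases hw with ⟨h1, _⟩ | ⟨h1, _⟩
    · exact h1.ge
    · exact h1.le
  have hwp : w * p w = 0 := by
    rcases hw with ⟨h1, _⟩ | ⟨_, h2⟩
    · rw [h1]; ring
    · rw [h2]; ring
  set S : ℝ := (∑ j, a j) + 1 / c + w with hSdef
  have hS : 0 < S := by
    have h1 : 0 ≤ ∑ j, a j := Finset.sum_nonneg fun i _ => ha i
    have h2 : 0 < 1 / c := by positivity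
    simp only [hSdef]; linarith
  set q : Fin n → ℝ := fun i => a i + b i / c + w * μ i with hqdef
  have hq : ∀ i, 0 < q i := by
    intro i
    have h1 := ha i
    have h2 : 0 < b i / c := div_pos (hb i) hc
    have h3 : 0 ≤ w * μ i := mul_nonneg hw0 (hμ i).le
    simp only [hqdef]; linarith
  have hqsum : ∑ i, q i = S := by
    simp only [hqdef, hSdef]
    rw [Finset.sum_add_distrib, Finset.sum_add_distrib, ← Finset.sum_div, hbsum,
      ← Finset.mul_sum, hμsum, mul_one]
  have hαhat_eq : ∀ i, αhat w i = q i / S := by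
    intro i; simp [hαhat, hqdef, hSdef]
  have hahpos : ∀ i, 0 < αhat w i := by
    intro i; rw [hαhat_eq]; exact div_pos (hq i) hS
  have hahsum : ∑ i, αhat w i = 1 := by
    simp only [hαhat_eq]
    rw [← Finset.sum_div, hqsum, div_self hS.ne']
  have hqi : ∀ i, q i = a i + b i / c + w * μ i := fun i => by rw [hqdef]
  clear_value S q
  have hsplit : ∀ x y : ℝ, 0 ≤ x → 0 < y →
      x * Real.log (x / y) = x * Real.log x - x * Real.log y := by
    intro x y hx hy
    rcases hx.eq_or_lt with h | h
    · simp [← h]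
    · rw [Real.log_div h.ne' hy.ne', mul_sub]
  set C : ℝ := (∑ i, (a i * Real.log (a i) - a i)) + (1 / c) * ∑ i, b i * Real.log (b i)
      + w * ∑ i, μ i * Real.log (μ i) with hCdef
  clear_value C
  have hA : ∀ β : Fin n → ℝ, (∀ i, 0 < β i) →
      H β + w * ∑ i, μ i * Real.log (μ i / β i)
        = C + (∑ i, β i) - ∑ i, q i * Real.log (β i) := by
    intro β hβ
    rw [hH]
    simp only [hCdef]
    rw [Finset.mul_sum, Finset.mul_sum, Finset.mul_sum, Finset.mul_sum,
      ← Finset.sum_add_distrib, ← Finset.sum_add_distrib, ← Finset.sum_add_distrib,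
      ← Finset.sum_add_distrib, ← Finset.sum_add_distrib, ← Finset.sum_sub_distrib]
    refine Finset.sum_congr rfl fun i _ => ?_
    rw [hsplit (a i) (β i) (ha i) (hβ i), hsplit (b i) (β i) (hb i).le (hβ i),
      hsplit (μ i) (β i) (hμ i).le (hβ i)]
    rw [hqi i]
    ring
  have key : ∑ i, q i * Real.log (α i) ≤ ∑ i, q i * Real.log (αhat w i) := by
    have h1 : ∀ i ∈ Finset.univ, q i * Real.log (α i)
        ≤ q i * Real.log (αhat w i) + (S * α i - q i) := by
      intro i _
      have hr : 0 < α i / αhat w i := div_pos (hαpos i) (hahpos i)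
      have h2 := Real.log_le_sub_one_of_pos hr
      have h3 := mul_le_mul_of_nonneg_left h2 (hq i).le
      rw [Real.log_div (hαpos i).ne' (hahpos i).ne', mul_sub, mul_sub, mul_one] at h3
      have h4 : q i * (α i / αhat w i) = S * α i := by
        rw [hαhat_eq i, div_div_eq_mul_div, mul_comm (q i), div_mul_cancel₀ _ (hq i).ne',
          mul_comm]
      rw [h4] at h3
      linarith
    calc ∑ i, q i * Real.log (α i)
        ≤ ∑ i, (q i * Real.log (αhat w i) + (S * α i - q i)) := Finset.sum_le_sum h1
      _ = (∑ i, q i * Real.log (αhat w i)) + (S * ∑ i, α i - ∑ i, q i) := by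
          rw [Finset.sum_add_distrib, Finset.sum_sub_distrib, ← Finset.mul_sum]
      _ = ∑ i, q i * Real.log (αhat w i) := by rw [hαsum, hqsum]; ring
  have e1 := hA α hαpos
  have e2 := hA (αhat w) hahpos
  rw [hahsum] at e2
  rw [hαsum] at e1
  have hKah : (∑ i, μ i * Real.log (μ i / αhat w i)) = p w + ρ := by
    rw [hp]; ring
  have hwKah : w * ∑ i, μ i * Real.log (μ i / αhat w i) = w * ρ := by
    rw [hKah, mul_add, hwp, zero_add]
  have hwKα : w * ∑ i, μ i * Real.log (μ i / α i) ≤ w * ρ :=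
    mul_le_mul_of_nonneg_left hαfeas hw0
  rw [hwKah] at e2
  linarith
end

section
/- Let n ≥ 1, let μ ∈ Δ^n with all entries strictly positive, let t ∈ ℝ^n with all entries strictly positive, and set T = ∑_i t_i. Define q : [0,∞) → ℝ by q(w) = ∑_i μ_i·log( μ_i·(T + w) / (t_i + w·μ_i) ). Then q is monotonically non-increasing on [0,∞), i.e., for all 0 ≤ w_1 ≤ w_2, q(w_2) ≤ q(w_1). -/
open Finset

/-- The dual function `q(w) = ∑ᵢ μᵢ log(μᵢ(T+w)/(tᵢ+wμᵢ))` is monotonically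
non-increasing on `[0,∞)`. -/
theorem dual_function_antitone
    (n : ℕ) (hn : 1 ≤ n) (μ t : Fin n → ℝ)
    (hμ : ∀ i, 0 < μ i) (hμsum : ∑ i, μ i = 1)
    (ht : ∀ i, 0 < t i) (T : ℝ) (hT : T = ∑ i, t i)
    (q : ℝ → ℝ)
    (hq : q = fun w => ∑ i, μ i * Real.log (μ i * (T + w) / (t i + w * μ i))) :
    AntitoneOn q (Set.Ici (0 : ℝ)) := by
  have hne : Nonempty (Fin n) := ⟨⟨0, hn⟩⟩
  have hTpos : 0 < T := by
    rw [hT]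
    exact Finset.sum_pos (fun i _ => ht i) Finset.univ_nonempty
  set g : ℝ → ℝ := fun w =>
    Real.log (T + w) + ∑ i, μ i * (Real.log (μ i) - Real.log (t i + w * μ i)) with hg
  -- positivity facts
  have hTw : ∀ x : ℝ, 0 ≤ x → 0 < T + x := fun x hx => by linarith
  have htw : ∀ (x : ℝ) (i : Fin n), 0 ≤ x → 0 < t i + x * μ i := fun x i hx =>
    add_pos_of_pos_of_nonneg (ht i) (mul_nonneg hx (hμ i).le)
  -- derivative of g
  have hderiv : ∀ x : ℝ, 0 ≤ x →
      HasDerivAt g ((T + x)⁻¹ + ∑ i, μ i * (-(μ i / (t i + x * μ i)))) x := by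
    intro x hx
    have h1 : HasDerivAt (fun w : ℝ => Real.log (T + w)) (1 / (T + x)) x := by
      have := ((hasDerivAt_id x).const_add T).log (hTw x hx).ne'
      simpa using this
    have h2 : HasDerivAt (fun w : ℝ => ∑ i, μ i * (Real.log (μ i) - Real.log (t i + w * μ i)))
        (∑ i, μ i * (-(μ i / (t i + x * μ i)))) x := by
      apply HasDerivAt.fun_sum
      intro i _
      have hf : HasDerivAt (fun w : ℝ => t i + w * μ i) (μ i) x := by
        simpa using ((hasDerivAt_id x).mul_const (μ i)).const_add (t i)
      exact ((hf.log (htw x i hx).ne').const_sub (Real.log (μ i))).const_mul (μ i)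
    have := h1.fun_add h2
    simpa [one_div] using this
  have hd_nonpos : ∀ x : ℝ, 0 ≤ x →
      (T + x)⁻¹ + ∑ i, μ i * (-(μ i / (t i + x * μ i))) ≤ 0 := by
    intro x hx
    have hsum : ∑ i, (t i + x * μ i) = T + x := by
      rw [Finset.sum_add_distrib, ← Finset.mul_sum, hμsum, hT, mul_one]
    have hcs := sq_sum_div_le_sum_sq_div Finset.univ μ (g := fun i => t i + x * μ i)
      (fun i _ => htw x i hx)
    rw [hμsum, hsum, one_pow] at hcs
    have : ∑ i, μ i * (-(μ i / (t i + x * μ i))) = -∑ i, μ i ^ 2 / (t i + x * μ i) := by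
      rw [← Finset.sum_neg_distrib]
      congr 1; ext i; field_simp
    rw [this]
    have : (1 : ℝ) / (T + x) ≤ ∑ i, μ i ^ 2 / (t i + x * μ i) := hcs
    rw [one_div] at this
    linarith
  -- g is antitone on [0, ∞)
  have hganti : AntitoneOn g (Set.Ici (0 : ℝ)) := by
    apply antitoneOn_of_deriv_nonpos (convex_Ici 0)
    · exact fun x hx => ((hderiv x hx).differentiableAt.continuousAt).continuousWithinAt
    · intro x hx
      rw [interior_Ici] at hx
      exact ((hderiv x (le_of_lt hx)).differentiableAt).differentiableWithinAt
    · intro x hx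
      rw [interior_Ici] at hx
      rw [(hderiv x (le_of_lt hx)).deriv]
      exact hd_nonpos x (le_of_lt hx)
  -- q = g on [0, ∞)
  have hqg : ∀ x : ℝ, 0 ≤ x → q x = g x := by
    intro x hx
    rw [hq, hg]
    simp only
    have : ∀ i : Fin n, μ i * Real.log (μ i * (T + x) / (t i + x * μ i)) =
        μ i * Real.log (T + x) + μ i * (Real.log (μ i) - Real.log (t i + x * μ i)) := by
      intro i
      rw [Real.log_div (mul_pos (hμ i) (hTw x hx)).ne' (htw x i hx).ne',
        Real.log_mul (hμ i).ne' (hTw x hx).ne']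
      ring
    rw [Finset.sum_congr rfl (fun i _ => this i), Finset.sum_add_distrib,
      ← Finset.sum_mul, hμsum, one_mul]
  intro a ha b hb hab
  rw [hqg a ha, hqg b hb]
  exact hganti ha hb hab
end

section
/- Let n ≥ 1, let μ ∈ Δ^n with all entries strictly positive, let t ∈ ℝ^n with all entries strictly positive, and set T = ∑_i t_i. Define q : [0,∞) → ℝ by q(w) = ∑_i μ_i·log( μ_i·(T + w) / (t_i + w·μ_i) ). Then q is convex on [0,∞). -/
open Finset

/-- Convexity transfers along pointwise equality on the set. -/
lemma convexOn_congr_aux {s : Set ℝ} {f g : ℝ → ℝ} (hf : ConvexOn ℝ s f)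
    (h : ∀ x ∈ s, g x = f x) : ConvexOn ℝ s g := by
  refine ⟨hf.1, fun x hx y hy a b ha hb hab => ?_⟩
  rw [h x hx, h y hy, h _ (hf.1 hx hy ha hb hab)]
  exact hf.2 hx hy ha hb hab

/-- The dual function `q(w) = ∑ᵢ μᵢ log(μᵢ(T+w)/(tᵢ+wμᵢ))` is convex on `[0,∞)`. -/
theorem dual_function_convex
    (n : ℕ) (hn : 1 ≤ n) (μ t : Fin n → ℝ)
    (hμ : ∀ i, 0 < μ i) (hμsum : ∑ i, μ i = 1)
    (ht : ∀ i, 0 < t i) (T : ℝ) (hT : T = ∑ i, t i)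
    (q : ℝ → ℝ)
    (hq : q = fun w => ∑ i, μ i * Real.log (μ i * (T + w) / (t i + w * μ i))) :
    ConvexOn ℝ (Set.Ici (0 : ℝ)) q := by
  have hne : Nonempty (Fin n) := ⟨⟨0, hn⟩⟩
  have hTpos : 0 < T := by
    rw [hT]; exact Finset.sum_pos (fun i _ => ht i) Finset.univ_nonempty
  have hTw : ∀ w : ℝ, 0 ≤ w → 0 < T + w := fun w hw => by linarith
  have hd : ∀ w : ℝ, 0 ≤ w → ∀ i, 0 < t i + w * μ i := fun w hw i =>
    add_pos_of_pos_of_nonneg (ht i) (mul_nonneg hw (hμ i).le)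
  -- the nicer form of q
  set f : ℝ → ℝ := fun w =>
    (∑ i, μ i * Real.log (μ i)) + Real.log (T + w)
      - ∑ i, μ i * Real.log (t i + w * μ i) with hf_def
  -- first derivative
  set f1 : ℝ → ℝ := fun w => 1 / (T + w) - ∑ i, μ i * (μ i / (t i + w * μ i)) with hf1_def
  have hf' : ∀ w : ℝ, 0 ≤ w → HasDerivAt f (f1 w) w := by
    intro w hw
    have h1 : HasDerivAt (fun w : ℝ => Real.log (T + w)) (1 / (T + w)) w :=
      ((hasDerivAt_id w).const_add T).log (hTw w hw).ne'
    have h2 : HasDerivAt (fun w : ℝ => ∑ i, μ i * Real.log (t i + w * μ i))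
        (∑ i, μ i * (μ i / (t i + w * μ i))) w := by
      apply HasDerivAt.fun_sum
      intro i _
      simpa using ((((hasDerivAt_id w).mul_const (μ i)).const_add (t i)).log
        (hd w hw i).ne').const_mul (μ i)
    exact (h1.const_add _).sub h2
  -- second derivative
  set f2 : ℝ → ℝ := fun w =>
    ((0 * (T + w) - 1 * 1) / (T + w) ^ 2)
      - ∑ i, μ i * ((0 * (t i + w * μ i) - μ i * μ i) / (t i + w * μ i) ^ 2) with hf2_def
  have hf1' : ∀ w : ℝ, 0 ≤ w → HasDerivAt f1 (f2 w) w := by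
    intro w hw
    have h1 : HasDerivAt (fun w : ℝ => 1 / (T + w))
        ((0 * (T + w) - 1 * 1) / (T + w) ^ 2) w :=
      (hasDerivAt_const w (1 : ℝ)).div ((hasDerivAt_id w).const_add T) (hTw w hw).ne'
    have h2 : HasDerivAt (fun w : ℝ => ∑ i, μ i * (μ i / (t i + w * μ i)))
        (∑ i, μ i * ((0 * (t i + w * μ i) - μ i * μ i) / (t i + w * μ i) ^ 2)) w := by
      apply HasDerivAt.fun_sum
      intro i _
      simpa using ((hasDerivAt_const w (μ i)).div
        (((hasDerivAt_id w).mul_const (μ i)).const_add (t i)) (hd w hw i).ne').const_mul (μ i)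
    exact h1.sub h2
  -- nonnegativity of the second derivative, via Cauchy–Schwarz (twice)
  have hf2_nonneg : ∀ w : ℝ, 0 ≤ w → 0 ≤ f2 w := by
    intro w hw
    have hdw : ∀ i, 0 < t i + w * μ i := hd w hw
    have hTw' : 0 < T + w := hTw w hw
    have hE : f2 w = (∑ i, μ i ^ 3 / (t i + w * μ i) ^ 2) - 1 / (T + w) ^ 2 := by
      simp only [hf2_def]
      have : ∀ i ∈ Finset.univ,
          μ i * ((0 * (t i + w * μ i) - μ i * μ i) / (t i + w * μ i) ^ 2)
            = -(μ i ^ 3 / (t i + w * μ i) ^ 2) := by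
        intro i _
        have := (hdw i).ne'
        field_simp
        ring
      rw [Finset.sum_congr rfl this, Finset.sum_neg_distrib]
      have := hTw'.ne'
      field_simp
      ring
    rw [hE, sub_nonneg]
    -- Step 1: 1 ≤ S1 * (T + w) where S1 = ∑ μᵢ²/dᵢ
    set S1 : ℝ := ∑ i, μ i ^ 2 / (t i + w * μ i) with hS1
    have hS1pos : 0 < S1 := Finset.sum_pos (fun i _ => div_pos (pow_pos (hμ i) 2) (hdw i)) Finset.univ_nonempty
    have step1 : 1 ≤ S1 * (T + w) := by
      have hcs := Finset.sum_mul_sq_le_sq_mul_sq Finset.univ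
        (fun i => μ i / Real.sqrt (t i + w * μ i))
        (fun i => Real.sqrt (t i + w * μ i))
      have e1 : ∀ i ∈ Finset.univ,
          μ i / Real.sqrt (t i + w * μ i) * Real.sqrt (t i + w * μ i) = μ i := by
        intro i _
        exact div_mul_cancel₀ _ (Real.sqrt_ne_zero'.mpr (hdw i))
      have e2 : ∀ i ∈ Finset.univ,
          (μ i / Real.sqrt (t i + w * μ i)) ^ 2 = μ i ^ 2 / (t i + w * μ i) := by
        intro i _
        rw [div_pow, Real.sq_sqrt (hdw i).le]
      have e3 : ∀ i ∈ Finset.univ,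
          (Real.sqrt (t i + w * μ i)) ^ 2 = t i + w * μ i := by
        intro i _
        exact Real.sq_sqrt (hdw i).le
      rw [Finset.sum_congr rfl e1, Finset.sum_congr rfl e2, Finset.sum_congr rfl e3,
        hμsum] at hcs
      have hsum : ∑ i, (t i + w * μ i) = T + w := by
        rw [Finset.sum_add_distrib, ← Finset.mul_sum, hμsum, hT, mul_one]
      rw [hsum] at hcs
      simpa using hcs
    -- Step 2: S1² ≤ ∑ μᵢ³/dᵢ²
    have step2 : S1 ^ 2 ≤ ∑ i, μ i ^ 3 / (t i + w * μ i) ^ 2 := by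
      have hcs := Finset.sum_mul_sq_le_sq_mul_sq Finset.univ
        (fun i => μ i ^ 2 / ((t i + w * μ i) * Real.sqrt (μ i)))
        (fun i => Real.sqrt (μ i))
      have e1 : ∀ i ∈ Finset.univ,
          μ i ^ 2 / ((t i + w * μ i) * Real.sqrt (μ i)) * Real.sqrt (μ i)
            = μ i ^ 2 / (t i + w * μ i) := by
        intro i _
        rw [div_mul_eq_mul_div, mul_comm (t i + w * μ i) (Real.sqrt (μ i)),
          ← div_div, mul_div_assoc, div_self (Real.sqrt_ne_zero'.mpr (hμ i)), mul_one]
      have e2 : ∀ i ∈ Finset.univ,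
          (μ i ^ 2 / ((t i + w * μ i) * Real.sqrt (μ i))) ^ 2
            = μ i ^ 3 / (t i + w * μ i) ^ 2 := by
        intro i _
        rw [div_pow, mul_pow, Real.sq_sqrt (hμ i).le]
        have h1 := (hdw i).ne'
        have h2 := (hμ i).ne'
        field_simp
      have e3 : ∀ i ∈ Finset.univ, (Real.sqrt (μ i)) ^ 2 = μ i := by
        intro i _
        exact Real.sq_sqrt (hμ i).le
      rw [Finset.sum_congr rfl e1, Finset.sum_congr rfl e2, Finset.sum_congr rfl e3,
        hμsum, mul_one] at hcs
      exact hcs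
    have h1 : 1 / (T + w) ≤ S1 := by
      rw [div_le_iff₀ hTw']
      linarith
    calc 1 / (T + w) ^ 2 = (1 / (T + w)) ^ 2 := by rw [div_pow, one_pow]
      _ ≤ S1 ^ 2 := pow_le_pow_left₀ (by positivity) h1 2
      _ ≤ _ := step2
  -- f is convex on [0, ∞)
  have hderiv : ∀ w ∈ Set.Ici (0 : ℝ), deriv f w = f1 w := fun w hw => (hf' w hw).deriv
  have hfconv : ConvexOn ℝ (Set.Ici (0 : ℝ)) f := by
    apply convexOn_of_deriv2_nonneg (convex_Ici 0)
    · exact fun w hw => (hf' w hw).differentiableAt.continuousAt.continuousWithinAt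
    · rw [interior_Ici]
      exact fun w hw => (hf' w (le_of_lt hw)).differentiableAt.differentiableWithinAt
    · rw [interior_Ici]
      intro w hw
      have heq : deriv f =ᶠ[nhds w] f1 :=
        Filter.eventuallyEq_of_mem (isOpen_Ioi.mem_nhds hw)
          (fun x hx => hderiv x (Set.mem_Ici.mpr (le_of_lt hx)))
      exact ((heq.differentiableAt_iff).mpr
        (hf1' w (le_of_lt hw)).differentiableAt).differentiableWithinAt
    · rw [interior_Ici]
      intro w hw
      have heq : deriv f =ᶠ[nhds w] f1 :=
        Filter.eventuallyEq_of_mem (isOpen_Ioi.mem_nhds hw)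
          (fun x hx => hderiv x (Set.mem_Ici.mpr (le_of_lt hx)))
      show 0 ≤ deriv (deriv f) w
      rw [heq.deriv_eq, (hf1' w (le_of_lt hw)).deriv]
      exact hf2_nonneg w (le_of_lt hw)
  -- transfer to q
  apply convexOn_congr_aux hfconv
  intro w hw
  simp only [hq, hf_def]
  have h1 : ∀ i ∈ Finset.univ,
      μ i * Real.log (μ i * (T + w) / (t i + w * μ i))
        = μ i * Real.log (μ i) + μ i * Real.log (T + w)
          - μ i * Real.log (t i + w * μ i) := by
    intro i _
    rw [Real.log_div (mul_pos (hμ i) (hTw w hw)).ne' (hd w hw i).ne',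
      Real.log_mul (hμ i).ne' (hTw w hw).ne']
    ring
  rw [Finset.sum_congr rfl h1]
  rw [Finset.sum_sub_distrib, Finset.sum_add_distrib, ← Finset.sum_mul, hμsum, one_mul]
end

section
/- Let I ⊆ ℝ be an interval (an order-connected set of reals) and let p : ℝ → ℝ be twice differentiable on I, convex on I, and monotonically non-increasing on I. Assume there exist x̃, x̄ ∈ I with p(x̃) > 0 and p(x̄) < 0. Then: (a) p has a unique root on I, i.e., there is exactly one r ∈ I with p(r) = 0; and (b) the Newton iteration defined by x_0 = x̃ and x_{k+1} = x_k − p(x_k)/p'(x_k) is well defined (for every k, x_k ∈ I and p'(x_k) < 0) and the sequence (x_k) converges to r. -/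
open Filter

/-- Proposition 2: a convex, twice differentiable, non-increasing function with a sign
change on an interval has a unique root there, and Newton's method started at a point
with positive value is well defined and converges to that root. -/
theorem newton_converges_to_unique_root
    (I : Set ℝ) (hI : I.OrdConnected) (p : ℝ → ℝ)
    (hdiff : ∀ x ∈ I, DifferentiableAt ℝ p x)
    (hdiff2 : ∀ x ∈ I, DifferentiableAt ℝ (deriv p) x)
    (hconv : ConvexOn ℝ I p) (hmono : AntitoneOn p I)
    (xt xb : ℝ) (hxt : xt ∈ I) (hxb : xb ∈ I)
    (hpxt : 0 < p xt) (hpxb : p xb < 0) :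
    ∃ r ∈ I, p r = 0 ∧ (∀ r' ∈ I, p r' = 0 → r' = r) ∧
      ∀ x : ℕ → ℝ, x 0 = xt →
        (∀ k, x (k + 1) = x k - p (x k) / deriv p (x k)) →
        (∀ k, x k ∈ I ∧ deriv p (x k) < 0) ∧ Tendsto x atTop (nhds r) := by
  have hcont : ∀ x ∈ I, ContinuousAt p x := fun x hx => (hdiff x hx).continuousAt
  -- tangent line lies below the graph
  have tangent : ∀ x ∈ I, ∀ y ∈ I, p x + deriv p x * (y - x) ≤ p y := by
    intro x hx y hy
    rcases lt_trichotomy x y with h | rfl | h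
    · have h1 := hconv.deriv_le_slope hx hy h (hdiff x hx)
      rw [slope_def_field] at h1
      have h2 := (le_div_iff₀ (sub_pos.mpr h)).1 h1
      linarith
    · simp
    · have h1 := hconv.slope_le_deriv hy hx h (hdiff x hx)
      rw [slope_def_field] at h1
      have h2 := (div_le_iff₀ (sub_pos.mpr h)).1 h1
      have h3 : deriv p x * (y - x) = -(deriv p x * (x - y)) := by ring
      linarith
  have hlt : xt < xb := by
    by_contra hle
    push_neg at hle
    have := hmono hxb hxt hle
    linarith
  have hsub : Set.Icc xt xb ⊆ I := hI.out hxt hxb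
  have hcontOn : ContinuousOn p (Set.Icc xt xb) :=
    fun x hx => (hcont x (hsub hx)).continuousWithinAt
  obtain ⟨r, hrmem, hpr⟩ :=
    intermediate_value_Icc' hlt.le hcontOn (Set.mem_Icc.mpr ⟨hpxb.le, hpxt.le⟩)
  have hrI : r ∈ I := hsub hrmem
  -- any root is < xb
  have root_lt_xb : ∀ s ∈ I, p s = 0 → s < xb := by
    intro s hs hps
    by_contra hle
    push_neg at hle
    have := hmono hxb hs hle
    linarith
  -- uniqueness
  have key : ∀ a ∈ I, ∀ b ∈ I, p a = 0 → p b = 0 → ¬ a < b := by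
    intro a ha b hb hpa hpb hab
    have hbx : b < xb := root_lt_xb b hb hpb
    have hs := hconv.slope_mono_adjacent ha hxb hab hbx
    have hs : (p b - p a) / (b - a) ≤ (p xb - p b) / (xb - b) := hs
    have h1 : (p b - p a) / (b - a) = 0 := by rw [hpa, hpb]; simp
    have h2 : (p xb - p b) / (xb - b) < 0 :=
      div_neg_of_neg_of_pos (by linarith) (by linarith)
    rw [h1] at hs
    linarith
  have uniq : ∀ r' ∈ I, p r' = 0 → r' = r := by
    intro r' hr' hpr'
    rcases lt_trichotomy r' r with h | h | h
    · exact absurd h (key r' hr' r hrI hpr' hpr)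
    · exact h
    · exact absurd h (key r hrI r' hr' hpr hpr')
  -- basic position facts
  have hxtr : xt < r := by
    by_contra hle
    push_neg at hle
    have := hmono hrI hxt hle
    linarith
  have hrxb : r < xb := root_lt_xb r hrI hpr
  have hsub2 : Set.Icc xt r ⊆ I := hI.out hxt hrI
  -- negativity of the derivative at points left of xb with nonneg value
  have derivneg : ∀ s ∈ I, s < xb → 0 ≤ p s → deriv p s < 0 := by
    intro s hs hsx hps
    have h1 := hconv.deriv_le_slope hs hxb hsx (hdiff s hs)
    rw [slope_def_field] at h1
    have h2 : (p xb - p s) / (xb - s) < 0 :=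
      div_neg_of_neg_of_pos (by linarith) (by linarith)
    linarith
  refine ⟨r, hrI, hpr, uniq, ?_⟩
  intro x hx0 hrec
  -- main invariant
  have inv : ∀ k, x k ∈ Set.Icc xt r ∧ 0 ≤ p (x k) := by
    intro k
    induction k with
    | zero => exact ⟨by rw [hx0]; exact Set.mem_Icc.mpr ⟨le_refl _, hxtr.le⟩, by rw [hx0]; linarith⟩
    | succ k ih =>
      obtain ⟨hk, hpk⟩ := ih
      have hkI : x k ∈ I := hsub2 hk
      have hkxb : x k < xb := lt_of_le_of_lt hk.2 hrxb
      have hd : deriv p (x k) < 0 := derivneg _ hkI hkxb hpk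
      have hstep : p (x k) / deriv p (x k) ≤ 0 :=
        div_nonpos_of_nonneg_of_nonpos hpk hd.le
      have hmonostep : x k ≤ x (k + 1) := by rw [hrec k]; linarith
      have hle_r : x (k + 1) ≤ r := by
        have ht := tangent (x k) hkI r hrI
        rw [hpr] at ht
        -- deriv p (x k) * (r - x k) ≤ - p (x k)
        have h3 : (- p (x k)) / deriv p (x k) ≤ r - x k := by
          rw [div_le_iff_of_neg hd]
          nlinarith
        rw [hrec k]
        rw [neg_div] at h3
        linarith
      have hmemsucc : x (k + 1) ∈ Set.Icc xt r :=
        Set.mem_Icc.mpr ⟨le_trans hk.1 hmonostep, hle_r⟩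
      refine ⟨hmemsucc, ?_⟩
      have ht := tangent (x k) hkI (x (k + 1)) (hsub2 hmemsucc)
      have hcalc : deriv p (x k) * (x (k + 1) - x k) = - p (x k) := by
        have h5 : x (k + 1) - x k = -(p (x k) / deriv p (x k)) := by rw [hrec k]; ring
        rw [h5, mul_neg, mul_div_cancel₀ _ hd.ne]
      rw [hcalc] at ht
      linarith
  have memI : ∀ k, x k ∈ I := fun k => hsub2 (inv k).1
  have dneg : ∀ k, deriv p (x k) < 0 := fun k =>
    derivneg _ (memI k) (lt_of_le_of_lt (inv k).1.2 hrxb) (inv k).2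
  have hmonox : Monotone x := by
    apply monotone_nat_of_le_succ
    intro k
    have hstep : p (x k) / deriv p (x k) ≤ 0 :=
      div_nonpos_of_nonneg_of_nonpos (inv k).2 (dneg k).le
    rw [hrec k]; linarith
  have hbdd : BddAbove (Set.range x) := ⟨r, by rintro _ ⟨k, rfl⟩; exact (inv k).1.2⟩
  have hTL : Tendsto x atTop (nhds (⨆ i, x i)) := tendsto_atTop_ciSup hmonox hbdd
  set L := ⨆ i, x i with hL
  have hLmem : L ∈ Set.Icc xt r :=
    isClosed_Icc.mem_of_tendsto hTL (Eventually.of_forall fun k => (inv k).1)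
  have hLI : L ∈ I := hsub2 hLmem
  have hpcomp : Tendsto (fun k => p (x k)) atTop (nhds (p L)) :=
    (hcont L hLI).tendsto.comp hTL
  have hpL : 0 ≤ p L := ge_of_tendsto hpcomp (Eventually.of_forall fun k => (inv k).2)
  have hdL : deriv p L < 0 := derivneg L hLI (lt_of_le_of_lt hLmem.2 hrxb) hpL
  have hdcomp : Tendsto (fun k => deriv p (x k)) atTop (nhds (deriv p L)) :=
    (hdiff2 L hLI).continuousAt.tendsto.comp hTL
  have h1 : Tendsto (fun k => x (k + 1)) atTop (nhds L) :=
    hTL.comp (tendsto_add_atTop_nat 1)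
  have h2 : Tendsto (fun k => x k - p (x k) / deriv p (x k)) atTop
      (nhds (L - p L / deriv p L)) :=
    hTL.sub (hpcomp.div hdcomp hdL.ne)
  have h3 : Tendsto (fun k => x (k + 1)) atTop (nhds (L - p L / deriv p L)) := by
    simpa only [← hrec] using h2
  have heq : L = L - p L / deriv p L := tendsto_nhds_unique h1 h3
  have hpL0 : p L = 0 := by
    have : p L / deriv p L = 0 := by linarith
    rcases div_eq_zero_iff.mp this with h | h
    · exact h
    · exact absurd h hdL.ne
  have : L = r := uniq L hLI hpL0
  rw [this] at hTL
  exact ⟨fun k => ⟨memI k, dneg k⟩, hTL⟩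
end

section
/- Let n, m ≥ 1, let C ∈ ℝ^{n×m} have all entries C_{ij} ≥ 0, let τ_1, τ_2 ≥ 0 and t > 0, let α ∈ Δ^n and β ∈ Δ^m have all entries strictly positive, and let π̄ ∈ ℝ^{n×m} satisfy 0 < π̄_{ij} ≤ 1 for all i,j. Define, for π ∈ ℝ^{n×m} with π_{ij} ≥ 0, φ(π) = ∑_{ij} C_{ij} π_{ij} + τ_1·KL(π·1_m, α) + τ_2·KL(πᵀ·1_n, β) + (1/t)·KL(π, π̄), where π·1_m ∈ ℝ^n and πᵀ·1_n ∈ ℝ^m are the row-sum and column-sum vectors of π and KL(π, π̄) treats π, π̄ as vectors in ℝ^{nm}. If π* minimizes φ over {π ∈ ℝ^{n×m} : π_{ij} ≥ 0 for all i,j}, then π*_{ij} ≤ 1 for all i,j. -/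
open Finset

/-- Gradient inequality for `y ↦ y log(y/p) - y + p`. -/
lemma kl_grad (p x y : ℝ) (hp : 0 < p) (hx : 0 < x) (hy : 0 ≤ y) :
    (x * Real.log (x / p) - x + p) + (y - x) * Real.log (x / p)
      ≤ y * Real.log (y / p) - y + p := by
  rcases eq_or_lt_of_le hy with h0 | hy0
  · subst h0; simp; nlinarith
  · have h1 : Real.log (x / y) ≤ x / y - 1 := Real.log_le_sub_one_of_pos (div_pos hx hy0)
    have h2 : y * Real.log (x / y) ≤ x - y := by
      have := mul_le_mul_of_nonneg_left h1 hy0.le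
      calc y * Real.log (x / y) ≤ y * (x / y - 1) := this
        _ = x - y := by field_simp
    rw [Real.log_div hx.ne' hp.ne', Real.log_div hy0.ne' hp.ne',
        Real.log_div hx.ne' hy0.ne'] at *
    nlinarith
lemma kl_mono (a x y : ℝ) (ha : 0 < a) (hx : 1 ≤ x) (hxy : x ≤ y) (ha1 : a ≤ 1) :
    x * Real.log (x / a) - x + a ≤ y * Real.log (y / a) - y + a := by
  have hx0 : 0 < x := lt_of_lt_of_le one_pos hx
  have hgrad := kl_grad a x y ha hx0 (le_trans hx0.le hxy)
  have hlog : 0 ≤ Real.log (x / a) := by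
    apply Real.log_nonneg
    rw [le_div_iff₀ ha]; linarith
  nlinarith
lemma kl_strict (p x : ℝ) (hp : 0 < p) (hp1 : p ≤ 1) (hx : 1 < x) :
    1 * Real.log (1 / p) - 1 + p < x * Real.log (x / p) - x + p := by
  have hx0 : 0 < x := lt_trans one_pos hx
  have hlx : Real.log (1 / x) < 1 / x - 1 :=
    Real.log_lt_sub_one_of_pos (by positivity) (by intro h; rw [div_eq_one_iff_eq hx0.ne'] at h; linarith)
  have hxlx : x - 1 < x * Real.log x := by
    rw [Real.log_div (by norm_num) hx0.ne', Real.log_one] at hlx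
    have h2 := mul_lt_mul_of_pos_left hlx hx0
    have h3 : x * (1 / x - 1) = 1 - x := by field_simp
    nlinarith
  have hlp : Real.log p ≤ 0 := Real.log_nonpos hp.le hp1
  rw [Real.log_div (by norm_num) hp.ne', Real.log_div hx0.ne' hp.ne', Real.log_one]
  nlinarith

open Finset

/-- Boundedness of the minimizer of the `π`-subproblem: any minimizer of the linearized
penalized objective `φ` over the nonnegative orthant has all entries at most `1`. -/
theorem pi_subproblem_minimizer_le_one
    (n m : ℕ) (hn : 1 ≤ n) (hm : 1 ≤ m)
    (C : Fin n → Fin m → ℝ) (hC : ∀ i j, 0 ≤ C i j)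
    (τ₁ τ₂ t : ℝ) (hτ₁ : 0 ≤ τ₁) (hτ₂ : 0 ≤ τ₂) (ht : 0 < t)
    (α : Fin n → ℝ) (hα : ∀ i, 0 < α i) (hαsum : ∑ i, α i = 1)
    (β : Fin m → ℝ) (hβ : ∀ j, 0 < β j) (hβsum : ∑ j, β j = 1)
    (πb : Fin n → Fin m → ℝ) (hπb : ∀ i j, 0 < πb i j ∧ πb i j ≤ 1)
    (φ : (Fin n → Fin m → ℝ) → ℝ)
    (hφ : φ = fun π =>
      (∑ i, ∑ j, C i j * π i j)
      + τ₁ * ∑ i, ((∑ j, π i j) * Real.log ((∑ j, π i j) / α i) - (∑ j, π i j) + α i)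
      + τ₂ * ∑ j, ((∑ i, π i j) * Real.log ((∑ i, π i j) / β j) - (∑ i, π i j) + β j)
      + (1 / t) * ∑ i, ∑ j, (π i j * Real.log (π i j / πb i j) - π i j + πb i j))
    (πs : Fin n → Fin m → ℝ) (hπs : ∀ i j, 0 ≤ πs i j)
    (hmin : ∀ π : Fin n → Fin m → ℝ, (∀ i j, 0 ≤ π i j) → φ πs ≤ φ π) :
    ∀ i j, πs i j ≤ 1 := by
  intro i j
  by_contra hgt
  push_neg at hgt
  set π' : Fin n → Fin m → ℝ := fun i' j' => if i' = i ∧ j' = j then 1 else πs i' j' with hπ'def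
  have hπ'nn : ∀ i' j', 0 ≤ π' i' j' := by
    intro i' j'; simp only [hπ'def]; split
    · exact zero_le_one
    · exact hπs i' j'
  have hle := hmin π' hπ'nn
  -- basic facts
  have hα1 : α i ≤ 1 := by
    rw [← hαsum]
    exact Finset.single_le_sum (fun k _ => (hα k).le) (mem_univ i)
  have hβ1 : β j ≤ 1 := by
    rw [← hβsum]
    exact Finset.single_le_sum (fun k _ => (hβ k).le) (mem_univ j)
  -- row sums
  have hrow : ∀ i', i' ≠ i → ∑ j', π' i' j' = ∑ j', πs i' j' := by
    intro i' h
    refine Finset.sum_congr rfl fun j' _ => ?_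
    simp [hπ'def, h]
  have hrowi : ∑ j', π' i j' = (∑ j', πs i j') - πs i j + 1 := by
    have h1 : ∀ j' ∈ Finset.univ, π' i j'
        = πs i j' + (if j' = j then 1 - πs i j else 0) := by
      intro j' _
      simp only [hπ'def, true_and]
      split <;> simp_all
    rw [Finset.sum_congr rfl h1, Finset.sum_add_distrib, Finset.sum_ite_eq' univ j]
    simp; ring
  -- column sums
  have hcol : ∀ j', j' ≠ j → ∑ i', π' i' j' = ∑ i', πs i' j' := by
    intro j' h
    refine Finset.sum_congr rfl fun i' _ => ?_
    simp [hπ'def, h]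
  have hcolj : ∑ i', π' i' j = (∑ i', πs i' j) - πs i j + 1 := by
    have h1 : ∀ i' ∈ Finset.univ, π' i' j
        = πs i' j + (if i' = i then 1 - πs i j else 0) := by
      intro i' _
      simp only [hπ'def, and_true]
      split <;> simp_all
    rw [Finset.sum_congr rfl h1, Finset.sum_add_distrib, Finset.sum_ite_eq' univ i]
    simp; ring
  -- term A
  have hA : ∑ i', ∑ j', C i' j' * π' i' j' ≤ ∑ i', ∑ j', C i' j' * πs i' j' := by
    refine Finset.sum_le_sum fun i' _ => Finset.sum_le_sum fun j' _ => ?_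
    simp only [hπ'def]
    split
    · rename_i h; obtain ⟨h1, h2⟩ := h; subst h1; subst h2
      nlinarith [hC i' j', hgt]
    · exact le_refl _
  -- term B
  have hB : ∑ i', ((∑ j', π' i' j') * Real.log ((∑ j', π' i' j') / α i') - (∑ j', π' i' j') + α i')
      ≤ ∑ i', ((∑ j', πs i' j') * Real.log ((∑ j', πs i' j') / α i') - (∑ j', πs i' j') + α i') := by
    refine Finset.sum_le_sum fun i' _ => ?_
    by_cases h : i' = i
    · subst h
      rw [hrowi]
      have hxS : πs i' j ≤ ∑ j', πs i' j' :=
        Finset.single_le_sum (fun k _ => hπs i' k) (mem_univ j)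
      exact kl_mono (α i') _ _ (hα i') (by linarith) (by linarith) hα1
    · rw [hrow i' h]
  -- term C
  have hCterm : ∑ j', ((∑ i', π' i' j') * Real.log ((∑ i', π' i' j') / β j') - (∑ i', π' i' j') + β j')
      ≤ ∑ j', ((∑ i', πs i' j') * Real.log ((∑ i', πs i' j') / β j') - (∑ i', πs i' j') + β j') := by
    refine Finset.sum_le_sum fun j' _ => ?_
    by_cases h : j' = j
    · subst h
      rw [hcolj]
      have hxS : πs i j' ≤ ∑ i', πs i' j' :=
        Finset.single_le_sum (fun k _ => hπs k j') (mem_univ i)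
      exact kl_mono (β j') _ _ (hβ j') (by linarith) (by linarith) hβ1
    · rw [hcol j' h]
  -- term D (strict)
  have hD : ∑ i', ∑ j', (π' i' j' * Real.log (π' i' j' / πb i' j') - π' i' j' + πb i' j')
      < ∑ i', ∑ j', (πs i' j' * Real.log (πs i' j' / πb i' j') - πs i' j' + πb i' j') := by
    refine Finset.sum_lt_sum (fun i' _ => ?_) ⟨i, mem_univ i, ?_⟩
    · refine Finset.sum_le_sum fun j' _ => ?_
      by_cases h : i' = i ∧ j' = j
      · obtain ⟨h1, h2⟩ := h; subst h1; subst h2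
        have hks := kl_strict (πb i' j') (πs i' j') (hπb i' j').1 (hπb i' j').2 hgt
        have hval : π' i' j' = 1 := by simp [hπ'def]
        rw [hval]
        linarith
      · have hval : π' i' j' = πs i' j' := by simp only [hπ'def, if_neg h]
        rw [hval]
    · refine Finset.sum_lt_sum (fun j' _ => ?_) ⟨j, mem_univ j, ?_⟩
      · by_cases h : j' = j
        · subst h
          have hks := kl_strict (πb i j') (πs i j') (hπb i j').1 (hπb i j').2 hgt
          have hval : π' i j' = 1 := by simp [hπ'def]
          rw [hval]
          linarith
        · have hval : π' i j' = πs i j' := by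
            simp only [hπ'def]
            exact if_neg (fun hc => h hc.2)
          rw [hval]
      · have hks := kl_strict (πb i j) (πs i j) (hπb i j).1 (hπb i j).2 hgt
        have hval : π' i j = 1 := by simp [hπ'def]
        rw [hval]
        linarith
  -- combine
  rw [hφ] at hle
  simp only at hle
  have hτB := mul_le_mul_of_nonneg_left hB hτ₁
  have hτC := mul_le_mul_of_nonneg_left hCterm hτ₂
  have htD := mul_lt_mul_of_pos_left hD (by positivity : (0:ℝ) < 1 / t)
  linarith
end

section
/- Let n, m ≥ 1, τ_1, τ_2 ≥ 0, σ > 0, and t, c, r > 0. Let f : ℝ^{n×m} → ℝ be differentiable with gradient ∇f that is L_f-Lipschitz with respect to the Frobenius norm. Fix μ ∈ Δ^n, ν ∈ Δ^m and ρ_1, ρ_2 ≥ 0, and let S_α = {α ∈ Δ^n : all α_i > 0 and ∑_i μ_i log(μ_i/α_i) ≤ ρ_1} and S_β = {β ∈ Δ^m : all β_j > 0 and ∑_j ν_j log(ν_j/β_j) ≤ ρ_2}. Define F(π,α,β) = f(π) + τ_1·KL(π·1_m, α) + τ_2·KL(πᵀ·1_n, β). Let π^k ∈ ℝ^{n×m}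 with all entries strictly positive, α^k ∈ S_α, β^k ∈ S_β, and suppose: π^{k+1} minimizes π ↦ ⟨∇f(π^k), π⟩ + τ_1·KL(π·1_m, α^k) + τ_2·KL(πᵀ·1_n, β^k) + (1/t)·KL(π, π^k) over {π : π_{ij} ≥ 0}; α^{k+1} minimizes α ↦ τ_1·KL(π^{k+1}·1_m, α) + (1/c)·KL(α^k, α) over S_α; and β^{k+1} minimizes β ↦ τ_2·KL((π^{k+1})ᵀ·1_n, β) + (1/r)·KL(β^k, β) over S_β. Assume in addition that KL(π^{k+1}, π^k) ≥ (σ/2)·‖π^{k+1} − π^k‖_F², KL(α^k, α^{k+1}) ≥ (σ/2)·‖α^k − α^{k+1}‖₂², and KL(β^k, β^{k+1}) ≥ (σ/2)·‖β^k − β^{k+1}‖₂². Then F(π^{k+1}, α^{k+1}, β^{k+1}) − F(π^k, α^k, β^k) ≤ −(1/t − L_f/σ)·KL(π^{k+1}, π^k) − (1/c)·KL(α^k, α^{k+1}) − (1/r)·KL(β^k, β^{k+1}), and consequently F(π^{k+1}, α^{k+1}, β^{k+1}) − F(π^k, α^k, β^k) ≤ −(σ/2)·[ (1/t − L_f/σ)·‖π^{k+1}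 − π^k‖_F² + (1/c)·‖α^{k+1} − α^k‖₂² + (1/r)·‖β^{k+1} − β^k‖₂² ]. -/
open Finset

/-- Generalized Kullback–Leibler divergence between nonnegative vectors (with the
convention `0 · log 0 = 0`, which holds for `Real.log` since `Real.log 0 = 0`). -/
noncomputable def klVec {ι : Type*} [Fintype ι] (a b : ι → ℝ) : ℝ :=
  ∑ i, (a i * Real.log (a i / b i) - a i + b i)


open intervalIntegral in
lemma descent_lemma {E : Type*} [NormedAddCommGroup E] [InnerProductSpace ℝ E]
    [CompleteSpace E]
    (f : E → ℝ) (L : ℝ) (hf : Differentiable ℝ f)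
    (hLip : ∀ x y : E, ‖gradient f x - gradient f y‖ ≤ L * ‖x - y‖)
    (x y : E) :
    f y ≤ f x + inner ℝ (gradient f x) (y - x) + L / 2 * ‖y - x‖ ^ 2 := by
  set γ : ℝ → E := fun s => x + s • (y - x) with hγdef
  have hγ : ∀ s : ℝ, HasDerivAt γ (y - x) s := by
    intro s
    have h1 : HasDerivAt (fun s : ℝ => s • (y - x)) ((1 : ℝ) • (y - x)) s :=
      (hasDerivAt_id s).smul_const (y - x)
    have h2 := h1.const_add x
    rw [one_smul] at h2
    exact h2
  set φ' : ℝ → ℝ := fun s => (inner ℝ (gradient f (γ s)) (y - x) : ℝ) with hφ'def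
  have hφ : ∀ s : ℝ, HasDerivAt (fun s => f (γ s)) (φ' s) s := by
    intro s
    have hg : HasGradientAt f (gradient f (γ s)) (γ s) := (hf (γ s)).hasGradientAt
    have hfd := hg.hasFDerivAt
    have := hfd.comp_hasDerivAt s (hγ s)
    exact this
  have hgradcont : Continuous (gradient f) := by
    have : LipschitzWith (Real.toNNReal L) (gradient f) := by
      apply LipschitzWith.of_dist_le_mul
      intro a b
      rw [dist_eq_norm, dist_eq_norm]
      calc ‖gradient f a - gradient f b‖ ≤ L * ‖a - b‖ := hLip a b
        _ ≤ Real.toNNReal L * ‖a - b‖ := by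
            gcongr
            exact Real.le_coe_toNNReal L
    exact this.continuous
  have hφ'cont : Continuous φ' := by
    apply Continuous.inner
    · exact hgradcont.comp (by continuity)
    · exact continuous_const
  have hftc : ∫ s in (0:ℝ)..1, φ' s = f (γ 1) - f (γ 0) :=
    intervalIntegral.integral_eq_sub_of_hasDerivAt (f := fun s => f (γ s)) (f' := φ')
      (fun s _ => hφ s) (hφ'cont.intervalIntegrable 0 1)
  have hγ0 : γ 0 = x := by simp [hγdef]
  have hγ1 : γ 1 = y := by simp [hγdef]
  have hbound : ∀ s ∈ Set.Icc (0:ℝ) 1,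
      φ' s ≤ (inner ℝ (gradient f x) (y - x) : ℝ) + L * ‖y - x‖ ^ 2 * s := by
    intro s hs
    have h1 : φ' s - (inner ℝ (gradient f x) (y - x) : ℝ)
        = (inner ℝ (gradient f (γ s) - gradient f x) (y - x) : ℝ) := by
      rw [inner_sub_left]
    have h2 : (inner ℝ (gradient f (γ s) - gradient f x) (y - x) : ℝ)
        ≤ ‖gradient f (γ s) - gradient f x‖ * ‖y - x‖ :=
      real_inner_le_norm _ _
    have h3 : ‖gradient f (γ s) - gradient f x‖ ≤ L * (s * ‖y - x‖) := by
      have := hLip (γ s) x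
      have hγs : γ s - x = s • (y - x) := by simp [hγdef]
      rw [hγs] at this
      calc ‖gradient f (γ s) - gradient f x‖ ≤ L * ‖s • (y - x)‖ := this
        _ = L * (s * ‖y - x‖) := by
            rw [norm_smul, Real.norm_eq_abs, abs_of_nonneg hs.1]
    nlinarith [norm_nonneg (y - x), mul_nonneg hs.1 (norm_nonneg (y - x)),
      hs.1, hs.2]
  have hint : ∫ s in (0:ℝ)..1, φ' s
      ≤ ∫ s in (0:ℝ)..1, ((inner ℝ (gradient f x) (y - x) : ℝ) + L * ‖y - x‖ ^ 2 * s) := by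
    apply intervalIntegral.integral_mono_on (by norm_num)
    · exact hφ'cont.intervalIntegrable 0 1
    · exact (by continuity : Continuous fun s : ℝ =>
        (inner ℝ (gradient f x) (y - x) : ℝ) + L * ‖y - x‖ ^ 2 * s).intervalIntegrable 0 1
    · exact hbound
  have hrhs : ∫ s in (0:ℝ)..1, ((inner ℝ (gradient f x) (y - x) : ℝ) + L * ‖y - x‖ ^ 2 * s)
      = (inner ℝ (gradient f x) (y - x) : ℝ) + L / 2 * ‖y - x‖ ^ 2 := by
    rw [intervalIntegral.integral_add (intervalIntegrable_const)
      ((intervalIntegrable_id.const_mul _)), intervalIntegral.integral_const_mul,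
      integral_id, intervalIntegral.integral_const]
    norm_num
    ring
  rw [hftc, hγ0, hγ1] at hint
  rw [hrhs] at hint
  linarith

lemma bpalm_arith (τ₁ τ₂ σ t c r Lf fn fo Gn Go Rno Roo Rnn Cno Coo Cnn Kπ Kα Kβ Sπ SA SB : ℝ)
    (hσ : 0 < σ) (ht : 0 < t) (hc : 0 < c) (hr : 0 < r) (hLf : 0 ≤ Lf)
    (hdesc : fn ≤ fo + (Gn - Go) + Lf / 2 * Sπ)
    (hA : Gn + τ₁ * Rno + τ₂ * Cno + 1 / t * Kπ ≤ Go + τ₁ * Roo + τ₂ * Coo + 1 / t * 0)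
    (hB : τ₁ * Rnn + 1 / c * Kα ≤ τ₁ * Rno + 1 / c * 0)
    (hC : τ₂ * Cnn + 1 / r * Kβ ≤ τ₂ * Cno + 1 / r * 0)
    (hπsc : σ / 2 * Sπ ≤ Kπ) (hαsc : σ / 2 * SA ≤ Kα) (hβsc : σ / 2 * SB ≤ Kβ) :
    (fn + τ₁ * Rnn + τ₂ * Cnn - (fo + τ₁ * Roo + τ₂ * Coo) ≤
      -(1 / t - Lf / σ) * Kπ - 1 / c * Kα - 1 / r * Kβ) ∧
    (fn + τ₁ * Rnn + τ₂ * Cnn - (fo + τ₁ * Roo + τ₂ * Coo) ≤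
      -(σ / 2) * ((1 / t - Lf / σ) * Sπ + 1 / c * SA + 1 / r * SB)) := by
  have hq : Lf / 2 * Sπ ≤ Lf / σ * Kπ := by
    have h1 : Lf / σ * (σ / 2 * Sπ) ≤ Lf / σ * Kπ :=
      mul_le_mul_of_nonneg_left hπsc (by positivity)
    have h2 : Lf / σ * (σ / 2 * Sπ) = Lf / 2 * Sπ := by
      field_simp
    linarith
  have h3 : 1 / t * (σ / 2 * Sπ) ≤ 1 / t * Kπ :=
    mul_le_mul_of_nonneg_left hπsc (by positivity)
  have h4 : 1 / c * (σ / 2 * SA) ≤ 1 / c * Kα :=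
    mul_le_mul_of_nonneg_left hαsc (by positivity)
  have h5 : 1 / r * (σ / 2 * SB) ≤ 1 / r * Kβ :=
    mul_le_mul_of_nonneg_left hβsc (by positivity)
  have hexp : σ / 2 * ((1 / t - Lf / σ) * Sπ + 1 / c * SA + 1 / r * SB)
      = 1 / t * (σ / 2 * Sπ) - Lf / 2 * Sπ + 1 / c * (σ / 2 * SA)
        + 1 / r * (σ / 2 * SB) := by
    field_simp
  constructor
  · linarith
  · linarith

lemma klVec_self {ι : Type*} [Fintype ι] (a : ι → ℝ) : klVec a a = 0 := by
  unfold klVec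
  apply Finset.sum_eq_zero
  intro i _
  rcases eq_or_ne (a i) 0 with h | h
  · simp [h]
  · rw [div_self h, Real.log_one]; ring

/-- Sufficient decrease of one BPALM iteration for the discrete robust
Gromov–Wasserstein problem. -/
theorem bpalm_sufficient_decrease
    (n m : ℕ) (hn : 1 ≤ n) (hm : 1 ≤ m)
    (τ₁ τ₂ : ℝ) (hτ₁ : 0 ≤ τ₁) (hτ₂ : 0 ≤ τ₂)
    (σ t c r : ℝ) (hσ : 0 < σ) (ht : 0 < t) (hc : 0 < c) (hr : 0 < r)
    (f : EuclideanSpace ℝ (Fin n × Fin m) → ℝ) (Lf : ℝ)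
    (hf : Differentiable ℝ f)
    (hLip : ∀ x y : EuclideanSpace ℝ (Fin n × Fin m),
      ‖gradient f x - gradient f y‖ ≤ Lf * ‖x - y‖)
    (μ : Fin n → ℝ) (hμ : ∀ i, 0 < μ i) (hμsum : ∑ i, μ i = 1)
    (ν : Fin m → ℝ) (hν : ∀ j, 0 < ν j) (hνsum : ∑ j, ν j = 1)
    (ρ₁ ρ₂ : ℝ) (hρ₁ : 0 ≤ ρ₁) (hρ₂ : 0 ≤ ρ₂)
    (Sα : Set (Fin n → ℝ))
    (hSα : Sα = {α | (∀ i, 0 < α i) ∧ (∑ i, α i = 1) ∧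
      (∑ i, μ i * Real.log (μ i / α i)) ≤ ρ₁})
    (Sβ : Set (Fin m → ℝ))
    (hSβ : Sβ = {β | (∀ j, 0 < β j) ∧ (∑ j, β j = 1) ∧
      (∑ j, ν j * Real.log (ν j / β j)) ≤ ρ₂})
    (F : EuclideanSpace ℝ (Fin n × Fin m) → (Fin n → ℝ) → (Fin m → ℝ) → ℝ)
    (hF : F = fun π α β => f π
      + τ₁ * klVec (fun i => ∑ j, π (i, j)) α
      + τ₂ * klVec (fun j => ∑ i, π (i, j)) β)
    (πold πnew : EuclideanSpace ℝ (Fin n × Fin m))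
    (αold αnew : Fin n → ℝ) (βold βnew : Fin m → ℝ)
    (hπold : ∀ q, 0 < πold q) (hαold : αold ∈ Sα) (hβold : βold ∈ Sβ)
    -- π-update: πnew minimizes the linearized objective over the nonnegative orthant
    (hπnew_nonneg : ∀ q, 0 ≤ πnew q)
    (hπnew_min : ∀ π : EuclideanSpace ℝ (Fin n × Fin m), (∀ q, 0 ≤ π q) →
      (∑ q, gradient f πold q * πnew q)
        + τ₁ * klVec (fun i => ∑ j, πnew (i, j)) αold
        + τ₂ * klVec (fun j => ∑ i, πnew (i, j)) βold
        + (1 / t) * klVec (fun q => πnew q) (fun q => πold q)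
      ≤ (∑ q, gradient f πold q * π q)
        + τ₁ * klVec (fun i => ∑ j, π (i, j)) αold
        + τ₂ * klVec (fun j => ∑ i, π (i, j)) βold
        + (1 / t) * klVec (fun q => π q) (fun q => πold q))
    -- α-update: αnew minimizes over Sα
    (hαnew_mem : αnew ∈ Sα)
    (hαnew_min : ∀ α ∈ Sα,
      τ₁ * klVec (fun i => ∑ j, πnew (i, j)) αnew + (1 / c) * klVec αold αnew
      ≤ τ₁ * klVec (fun i => ∑ j, πnew (i, j)) α + (1 / c) * klVec αold α)
    -- β-update: βnew minimizes over Sβ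
    (hβnew_mem : βnew ∈ Sβ)
    (hβnew_min : ∀ β ∈ Sβ,
      τ₂ * klVec (fun j => ∑ i, πnew (i, j)) βnew + (1 / r) * klVec βold βnew
      ≤ τ₂ * klVec (fun j => ∑ i, πnew (i, j)) β + (1 / r) * klVec βold β)
    -- strong-convexity lower bounds for the Bregman distances
    (hπsc : (σ / 2) * ∑ q, (πnew q - πold q) ^ 2 ≤
      klVec (fun q => πnew q) (fun q => πold q))
    (hαsc : (σ / 2) * ∑ i, (αold i - αnew i) ^ 2 ≤ klVec αold αnew)
    (hβsc : (σ / 2) * ∑ j, (βold j - βnew j) ^ 2 ≤ klVec βold βnew) :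
    F πnew αnew βnew - F πold αold βold ≤
      -(1 / t - Lf / σ) * klVec (fun q => πnew q) (fun q => πold q)
        - (1 / c) * klVec αold αnew - (1 / r) * klVec βold βnew ∧
    F πnew αnew βnew - F πold αold βold ≤
      -(σ / 2) * ((1 / t - Lf / σ) * (∑ q, (πnew q - πold q) ^ 2)
        + (1 / c) * (∑ i, (αnew i - αold i) ^ 2)
        + (1 / r) * (∑ j, (βnew j - βold j) ^ 2)) := by
  subst hF
  beta_reduce
  -- nonnegativity of the Lipschitz constant
  have hLf : 0 ≤ Lf := by
    have h0 := hLip (EuclideanSpace.single (⟨0, hn⟩, ⟨0, hm⟩) (1:ℝ)) 0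
    rw [sub_zero] at h0
    rw [EuclideanSpace.norm_single] at h0
    simpa using le_trans (norm_nonneg _) h0
  set g := gradient f πold with hg
  -- descent lemma, converted to coordinates
  have hdesc := descent_lemma f Lf hf hLip πold πnew
  have hinner : (inner ℝ g (πnew - πold) : ℝ)
      = ∑ q, g q * (πnew q - πold q) := by
    rw [PiLp.inner_apply]
    apply Finset.sum_congr rfl
    intro q _
    simp [RCLike.inner_apply]
    ring
  have hnormsq : ‖πnew - πold‖ ^ 2 = ∑ q, (πnew q - πold q) ^ 2 := by
    rw [EuclideanSpace.norm_eq, Real.sq_sqrt (by positivity)]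
    apply Finset.sum_congr rfl
    intro q _
    simp [Real.norm_eq_abs, sq_abs]
  rw [hinner, hnormsq] at hdesc
  have hsumsub : ∑ q, g q * (πnew q - πold q)
      = (∑ q, g q * πnew q) - ∑ q, g q * πold q := by
    rw [← Finset.sum_sub_distrib]
    apply Finset.sum_congr rfl
    intro q _
    ring
  rw [hsumsub] at hdesc
  -- the three optimality conditions
  have hA := hπnew_min πold (fun q => (hπold q).le)
  rw [klVec_self] at hA
  have hB := hαnew_min αold hαold
  rw [klVec_self] at hB
  have hC := hβnew_min βold hβold
  rw [klVec_self] at hC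
  set Kπ := klVec (fun q => πnew q) (fun q => πold q) with hKπ
  set Kα := klVec αold αnew with hKα
  set Kβ := klVec βold βnew with hKβ
  set Sπ := ∑ q, (πnew q - πold q) ^ 2 with hSπ
  set SA := ∑ i, (αold i - αnew i) ^ 2 with hSA
  set SB := ∑ j, (βold j - βnew j) ^ 2 with hSB
  have hSA' : ∑ i, (αnew i - αold i) ^ 2 = SA := by
    rw [hSA]; apply Finset.sum_congr rfl; intro i _; ring
  have hSB' : ∑ j, (βnew j - βold j) ^ 2 = SB := by
    rw [hSB]; apply Finset.sum_congr rfl; intro j _; ring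
  have hSπ0 : 0 ≤ Sπ := by rw [hSπ]; positivity
  have hSA0 : 0 ≤ SA := by rw [hSA]; positivity
  have hSB0 : 0 ≤ SB := by rw [hSB]; positivity
  -- quadratic bound via the Bregman strong convexity
  rw [hSA', hSB']
  exact bpalm_arith τ₁ τ₂ σ t c r Lf _ _ _ _ _ _ _ _ _ _ Kπ Kα Kβ Sπ SA SB
    hσ ht hc hr hLf hdesc hA hB hC hπsc hαsc hβsc
end
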